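/- arXiv:1601.02356 — 9 statements merged into one kernel-verified Lean document; each statement's English description precedes it below -/
import Mathlib

section
/- Let g be an n-Lie algebra over a field K with bracket [·,…,·] and let N : g → g be a linear map. Then N is a Nijenhuis operator on g if and only if for all x₁,…,xₙ ∈ g: Σ_{p=0}^{n} Σ_σ (−1)^{p(p−1)/2 + Σ_{j=1}^{p} σ(j)} N^p [x_{σ(1)},…,x_{σ(p)}, N x_{σ(p+1)},…, N x_{σ(n)}] = 0, where the inner summation is over all (p, n−p)-unshuffles σ of {1,…,n}, i.e. permutations with σ(1) < ⋯ < σ(p) and σ(p+1) < ⋯ < σ(n). -/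
open Finset

/-- `b` is an `m`-multilinear skew-symmetric (alternating) map. -/
def IsSkewMultilinear (K : Type*) [Field K] {g W : Type*} [AddCommGroup g] [Module K g]
    [AddCommGroup W] [Module K W] {m : ℕ} (b : (Fin m → g) → W) : Prop :=
  (∀ (x : Fin m → g) (i : Fin m) (u v : g),
      b (Function.update x i (u + v)) = b (Function.update x i u) + b (Function.update x i v)) ∧
  (∀ (x : Fin m → g) (i : Fin m) (c : K) (u : g),
      b (Function.update x i (c • u)) = c • b (Function.update x i u)) ∧
  (∀ (x : Fin m → g) (i j : Fin m), i ≠ j → x i = x j → b x = 0)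

/-- The Filippov (fundamental) identity for an `(n+1)`-ary bracket. -/
def IsFilippov {g : Type*} [AddCommGroup g] {n : ℕ} (b : (Fin (n + 1) → g) → g) : Prop :=
  ∀ (x : Fin n → g) (y : Fin (n + 1) → g),
    b (Fin.snoc x (b y)) = ∑ i : Fin (n + 1), b (Function.update y i (b (Fin.snoc x (y i))))

/-- `b` is an `(n+1)`-Lie algebra bracket. -/
def IsNLieBracket (K : Type*) [Field K] {g : Type*} [AddCommGroup g] [Module K g]
    {n : ℕ} (b : (Fin (n + 1) → g) → g) : Prop :=
  IsSkewMultilinear K b ∧ IsFilippov b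

/-- The brackets `[x₁,…,x_m]_N^j` defined inductively from an `m`-ary bracket `b`
and a linear map `N`: `[x]_N^0 = b x` and
`[x]_N^{j+1} = ∑_{|S| = j+1} b(N applied at positions in S) − N ([x]_N^j)`. -/
def nestedBracket {K : Type*} [Field K] {g : Type*} [AddCommGroup g] [Module K g]
    {m : ℕ} (b : (Fin m → g) → g) (N : Module.End K g) : ℕ → (Fin m → g) → g
  | 0 => b
  | j + 1 => fun x =>
      (∑ S ∈ Finset.powersetCard (j + 1) (Finset.univ : Finset (Fin m)),
          b (fun i => if i ∈ S then N (x i) else x i))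
        - N (nestedBracket b N j x)

/-- `N` is a Nijenhuis operator on the `(n+1)`-Lie algebra `(g, b)`:
`[Nx₁,…,Nx_{n+1}] = N([x₁,…,x_{n+1}]_N^n)`. -/
def IsNijenhuis {K : Type*} [Field K] {g : Type*} [AddCommGroup g] [Module K g]
    {n : ℕ} (b : (Fin (n + 1) → g) → g) (N : Module.End K g) : Prop :=
  ∀ x : Fin (n + 1) → g, b (fun i => N (x i)) = N (nestedBracket b N n x)

lemma skew_perm {K : Type*} [Field K] {g : Type*} [AddCommGroup g] [Module K g] {m : ℕ}
    (b : (Fin m → g) → g) (hb : IsSkewMultilinear K b) (v : Fin m → g) (σ : Equiv.Perm (Fin m)) :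
    b (v ∘ σ) = (Equiv.Perm.sign σ : ℤ) • b v := by
  let f : AlternatingMap K g g (Fin m) :=
    { toMultilinearMap :=
      { toFun := b
        map_update_add' := by
          intro inst x i u w
          have : inst = instDecidableEqFin m := Subsingleton.elim _ _
          subst this; exact hb.1 x i u w
        map_update_smul' := by
          intro inst x i c u
          have : inst = instDecidableEqFin m := Subsingleton.elim _ _
          subst this; exact hb.2.1 x i c u }
      map_eq_zero_of_eq' := fun x i j h hij => hb.2.2 x i j hij h }
  have := f.map_perm v σ
  simpa [f, Units.smul_def] using this

lemma strictMono_perm_eq_one {m : ℕ} (σ : Equiv.Perm (Fin m)) (hs : StrictMono (⇑σ)) : σ = 1 := by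
  have inst : WellFoundedLT (Fin m) := inferInstance
  have h2 : StrictMono (id : Fin m → Fin m) := fun a b h => h
  have : ⇑σ = (id : Fin m → Fin m) :=
    (hs.range_inj h2).1 (by simp [Set.range_eq_univ.2 σ.surjective])
  exact Equiv.ext fun x => congrFun this x

lemma sign_unshuffle_aux (m p : ℕ) (w : ℕ) : ∀ σ : Equiv.Perm (Fin m),
    (∀ i j : Fin m, i < j → ((j : ℕ) < p ∨ p ≤ (i : ℕ)) → σ i < σ j) →
    (∑ j ∈ univ.filter (fun j : Fin m => (j : ℕ) < p), (σ j : ℕ)) = w →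
    (Equiv.Perm.sign σ : ℤ) =
      (-1) ^ (w + ∑ j ∈ univ.filter (fun j : Fin m => (j : ℕ) < p), (j : ℕ)) := by
  induction w using Nat.strong_induction_on with
  | _ w ih =>
  intro σ hσ hw
  by_cases hid : ∀ j : Fin m, (j : ℕ) < p → σ j = j
  · have hsm : StrictMono (⇑σ) := by
      intro i k hik
      rcases lt_or_ge (k : ℕ) p with hk | hk
      · have hi : (i : ℕ) < p := lt_trans (show (i : ℕ) < (k : ℕ) from hik) hk
        rw [hid i hi, hid k hk]; exact hik
      · rcases lt_or_ge (i : ℕ) p with hi | hi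
        · rw [hid i hi]
          have hge : ¬ (σ k : ℕ) < p := by
            intro hlt
            have h1 : σ (σ k) = σ k := hid (σ k) hlt
            have h2 : σ k = k := σ.injective h1
            omega
          exact Fin.lt_def.2 (by omega)
        · exact hσ i k hik (Or.inr hi)
    have h1 : σ = 1 := strictMono_perm_eq_one σ hsm
    subst h1
    have hww : w = ∑ j ∈ univ.filter (fun j : Fin m => (j : ℕ) < p), (j : ℕ) := by
      rw [← hw]; rfl
    rw [← hww]
    simp [← two_mul, pow_mul]
  · push_neg at hid
    set F := univ.filter (fun j : Fin m => (j : ℕ) < p) with hF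
    have hT : (univ.filter (fun j : Fin m => (j : ℕ) < p ∧ σ j ≠ j)).Nonempty := by
      obtain ⟨j0, hj0, hj0'⟩ := hid
      exact ⟨j0, by simp [hj0, hj0']⟩
    set j := (univ.filter (fun j : Fin m => (j : ℕ) < p ∧ σ j ≠ j)).min' hT with hj
    have hjmem := Finset.min'_mem _ hT
    rw [Finset.mem_filter] at hjmem
    obtain ⟨-, hjp, hjne⟩ := hjmem
    have hlt_fix : ∀ i : Fin m, i < j → (i : ℕ) < p → σ i = i := by
      intro i hij hip
      by_contra hne
      have : j ≤ i := Finset.min'_le _ i (by simp [hip, hne])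
      exact absurd hij (not_lt.2 this)
    have hjv : (j : ℕ) < (σ j : ℕ) := by
      rcases lt_trichotomy ((σ j : ℕ)) ((j : ℕ)) with h | h | h
      · exfalso
        have hfix : σ (σ j) = σ j := hlt_fix (σ j) (Fin.lt_def.2 h) (lt_trans h hjp)
        exact hjne (σ.injective hfix)
      · exact absurd (Fin.ext h) hjne
      · exact h
    set v := (σ j : ℕ) with hv
    have hvm : v < m := (σ j).isLt
    set a : Fin m := ⟨v - 1, by omega⟩ with ha
    set c : Fin m := σ j with hc
    have hac : a ≠ c := by
      intro h
      have := congrArg Fin.val h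
      simp [ha, hc] at this
      omega
    have FA : ∀ i : Fin m, (i : ℕ) < p → σ i ≠ a := by
      intro i hip heq
      rcases lt_trichotomy i j with h | h | h
      · have hfix := hlt_fix i h hip
        rw [hfix] at heq
        have h1 : (i : ℕ) = v - 1 := congrArg Fin.val heq
        have h2 : (i : ℕ) < (j : ℕ) := h
        omega
      · subst h
        have : v = v - 1 := congrArg Fin.val heq
        omega
      · have h1 : σ j < σ i := hσ j i h (Or.inl hip)
        rw [heq] at h1
        have : v < v - 1 := h1
        omega
    set τ := Equiv.swap a c with hτ
    set σ' := τ * σ with hσ'def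
    have happ : ∀ i, σ' i = τ (σ i) := fun i => rfl
    have hσ'uns : ∀ i k : Fin m, i < k → ((k : ℕ) < p ∨ p ≤ (i : ℕ)) → σ' i < σ' k := by
      intro i k hik hbl
      have hs := hσ i k hik hbl
      rw [happ, happ]
      rcases hbl with hkp | hip
      · have hipp : (i : ℕ) < p := lt_trans (show (i : ℕ) < (k : ℕ) from hik) hkp
        have hia := FA i hipp
        have hka := FA k hkp
        by_cases hic : σ i = c
        · have hij : i = j := σ.injective hic
          have hkc : σ k ≠ c := fun h => (ne_of_lt hik) (σ.injective (hic.trans h.symm))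
          rw [hic, Equiv.swap_apply_right, Equiv.swap_apply_of_ne_of_ne hka hkc]
          have : (c : ℕ) < (σ k : ℕ) := by rw [← hic]; exact hs
          exact Fin.lt_def.2 (by simp only [ha]; omega)
        · by_cases hkc : σ k = c
          · rw [hkc, Equiv.swap_apply_right, Equiv.swap_apply_of_ne_of_ne hia hic]
            have h1 : (σ i : ℕ) < v := by rw [hkc] at hs; exact hs
            have h2 : (σ i : ℕ) ≠ v - 1 := fun h => hia (Fin.ext h)
            exact Fin.lt_def.2 (by simp only [ha]; omega)
          · rw [Equiv.swap_apply_of_ne_of_ne hia hic, Equiv.swap_apply_of_ne_of_ne hka hkc]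
            exact hs
      · have hkp : p ≤ (k : ℕ) := le_trans hip (le_of_lt hik)
        have hic : σ i ≠ c := fun h => by
          have := σ.injective h; subst this; omega
        have hkc : σ k ≠ c := fun h => by
          have := σ.injective h; subst this; omega
        by_cases hia : σ i = a
        · have hka : σ k ≠ a := fun h => by rw [← hia] at h; exact absurd (σ.injective h) (Fin.ne_of_lt hik).symm
          rw [hia, Equiv.swap_apply_left, Equiv.swap_apply_of_ne_of_ne hka hkc]
          have h1 : (v : ℕ) - 1 < (σ k : ℕ) := by rw [hia] at hs; exact hs
          have h2 : (σ k : ℕ) ≠ v := fun h => hkc (Fin.ext h)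
          exact Fin.lt_def.2 (by simp only [hc]; omega)
        · by_cases hka : σ k = a
          · rw [hka, Equiv.swap_apply_left, Equiv.swap_apply_of_ne_of_ne hia hic]
            have h1 : (σ i : ℕ) < v - 1 := by rw [hka] at hs; exact hs
            exact Fin.lt_def.2 (by simp only [hc]; omega)
          · rw [Equiv.swap_apply_of_ne_of_ne hia hic, Equiv.swap_apply_of_ne_of_ne hka hkc]
            exact hs
    have hjF : j ∈ F := by simp [hF, hjp]; exact hjp
    have hwsplit : (σ j : ℕ) + ∑ i ∈ F.erase j, (σ i : ℕ) = w := by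
      rw [← hw]
      exact Finset.add_sum_erase F (fun i => ((σ i : ℕ))) hjF
    have hw' : (∑ i ∈ F, (σ' i : ℕ)) = w - 1 := by
      rw [← Finset.add_sum_erase _ _ hjF]
      have h1 : (σ' j : ℕ) = v - 1 := by
        rw [happ, ← hc, Equiv.swap_apply_right]
      have h2 : ∑ i ∈ F.erase j, (σ' i : ℕ) = ∑ i ∈ F.erase j, (σ i : ℕ) := by
        apply Finset.sum_congr rfl
        intro i hi
        rw [Finset.mem_erase, hF, Finset.mem_filter] at hi
        obtain ⟨hij, -, hip⟩ := hi
        have hia := FA i hip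
        have hic : σ i ≠ c := fun h => hij (σ.injective h)
        rw [happ, Equiv.swap_apply_of_ne_of_ne hia hic]
      rw [h1, h2]
      omega
    have hw1 : 1 ≤ w := by omega
    have hsign' := ih (w - 1) (by omega) σ' hσ'uns hw'
    have hsignmul : (Equiv.Perm.sign σ' : ℤ) = -(Equiv.Perm.sign σ : ℤ) := by
      rw [hσ'def, map_mul, Equiv.Perm.sign_swap hac]
      push_cast
      ring
    rw [hsignmul] at hsign'
    have : (Equiv.Perm.sign σ : ℤ) = -(-1) ^ ((w - 1) + ∑ j ∈ F, (j : ℕ)) := by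
      omega
    rw [this]
    have harith : w + ∑ j ∈ F, (j : ℕ) = ((w - 1) + ∑ j ∈ F, (j : ℕ)) + 1 := by omega
    rw [harith, pow_succ]
    ring

lemma filter_lt_eq_map {m p : ℕ} (hp : p ≤ m) :
    (univ.filter (fun j : Fin m => (j : ℕ) < p)) = Finset.map (Fin.castLEEmb hp) univ := by
  ext j
  simp only [mem_filter, mem_univ, true_and, Finset.mem_map, Fin.castLEEmb_apply]
  constructor
  · intro h
    first
    | exact ⟨⟨(j : ℕ), h⟩, by ext; rfl⟩
    | exact ⟨⟨(j : ℕ), h⟩, mem_univ _, by ext; rfl⟩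
  · first
    | (rintro ⟨i, rfl⟩; exact i.isLt)
    | (rintro ⟨i, -, rfl⟩; exact i.isLt)

lemma card_filter_lt {m p : ℕ} (hp : p ≤ m) :
    (univ.filter (fun j : Fin m => (j : ℕ) < p)).card = p := by
  rw [filter_lt_eq_map hp, Finset.card_map, Finset.card_univ, Fintype.card_fin]

lemma sum_filter_lt {m p : ℕ} (hp : p ≤ m) :
    (∑ j ∈ univ.filter (fun j : Fin m => (j : ℕ) < p), (j : ℕ)) = p * (p - 1) / 2 := by
  rw [filter_lt_eq_map hp, Finset.sum_map]
  have : ∀ i : Fin p, ((Fin.castLEEmb hp i : Fin m) : ℕ) = (i : ℕ) := fun i => rfl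
  rw [Finset.sum_congr rfl (fun i _ => this i)]
  rw [Fin.sum_univ_eq_sum_range (fun i => i) p]
  exact Finset.sum_range_id p

lemma exists_unshuffle {m p : ℕ} (hp : p ≤ m) (S : Finset (Fin m)) (hS : S.card = p) :
    ∃ σ : Equiv.Perm (Fin m),
      (∀ i j : Fin m, i < j → ((j : ℕ) < p ∨ p ≤ (i : ℕ)) → σ i < σ j) ∧
      Finset.image σ (univ.filter (fun j : Fin m => (j : ℕ) < p)) = S := by
  have hSc : Sᶜ.card = m - p := by
    rw [Finset.card_compl, hS, Fintype.card_fin]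
  have hbound : ∀ j : Fin m, ¬ ((j : ℕ) < p) → (j : ℕ) - p < m - p := by
    intro j h; have := j.isLt; omega
  set f : Fin m → Fin m := fun j =>
    if h : (j : ℕ) < p then S.orderEmbOfFin hS ⟨(j : ℕ), h⟩
    else Sᶜ.orderEmbOfFin hSc ⟨(j : ℕ) - p, hbound j h⟩ with hf
  have hmemS : ∀ (j : Fin m) (h : (j : ℕ) < p), f j ∈ S := by
    intro j h; simp only [hf, dif_pos h]; exact Finset.orderEmbOfFin_mem _ _ _
  have hmemSc : ∀ (j : Fin m) (h : ¬ (j : ℕ) < p), f j ∈ Sᶜ := by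
    intro j h; simp only [hf, dif_neg h]; exact Finset.orderEmbOfFin_mem _ _ _
  have hinj : Function.Injective f := by
    intro j1 j2 heq
    by_cases h1 : (j1 : ℕ) < p <;> by_cases h2 : (j2 : ℕ) < p
    · simp only [hf, dif_pos h1, dif_pos h2] at heq
      have := (S.orderEmbOfFin hS).injective heq
      have := congrArg Fin.val this
      exact Fin.ext this
    · exact absurd ((Finset.mem_compl.1 (hmemSc j2 h2))) (by rw [← heq] at *; exact fun hc => hc (hmemS j1 h1))
    · exact absurd ((Finset.mem_compl.1 (hmemSc j1 h1))) (by rw [heq] at *; exact fun hc => hc (hmemS j2 h2))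
    · simp only [hf, dif_neg h1, dif_neg h2] at heq
      have := (Sᶜ.orderEmbOfFin hSc).injective heq
      have hv := congrArg Fin.val this
      simp only at hv
      exact Fin.ext (by omega)
  obtain ⟨σ, hσf⟩ : ∃ σ : Equiv.Perm (Fin m), ⇑σ = f :=
    ⟨Equiv.ofBijective f (Finite.injective_iff_bijective.mp hinj), rfl⟩
  refine ⟨σ, ?_, ?_⟩
  · intro i j hij hbl
    rw [show σ i = f i from by rw [hσf], show σ j = f j from by rw [hσf]]
    rcases hbl with hjp | hip
    · have hipp : (i : ℕ) < p := lt_trans (show (i : ℕ) < (j : ℕ) from hij) hjp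
      simp only [hf, dif_pos hipp, dif_pos hjp]
      exact (S.orderEmbOfFin hS).strictMono (by exact hij)
    · have hjp' : ¬ (j : ℕ) < p := by
        have : (i : ℕ) < (j : ℕ) := hij
        omega
      have hip' : ¬ (i : ℕ) < p := by omega
      simp only [hf, dif_neg hip', dif_neg hjp']
      refine (Sᶜ.orderEmbOfFin hSc).strictMono ?_
      have hii : (i : ℕ) < (j : ℕ) := hij
      exact Fin.lt_def.2 (by simp; omega)
  · apply Finset.eq_of_subset_of_card_le
    · intro y hy
      rw [Finset.mem_image] at hy
      obtain ⟨j, hj, rfl⟩ := hy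
      rw [Finset.mem_filter] at hj
      rw [hσf]
      exact hmemS j hj.2
    · rw [Finset.card_image_of_injective _ σ.injective, card_filter_lt hp, hS]

lemma unshuffle_ext {m p : ℕ} (hp : p ≤ m) (σ1 σ2 : Equiv.Perm (Fin m))
    (h1 : ∀ i j : Fin m, i < j → ((j : ℕ) < p ∨ p ≤ (i : ℕ)) → σ1 i < σ1 j)
    (h2 : ∀ i j : Fin m, i < j → ((j : ℕ) < p ∨ p ≤ (i : ℕ)) → σ2 i < σ2 j)
    (him : Finset.image σ1 (univ.filter (fun j : Fin m => (j : ℕ) < p)) =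
           Finset.image σ2 (univ.filter (fun j : Fin m => (j : ℕ) < p))) :
    σ1 = σ2 := by
  have inst : WellFoundedLT (Fin m) := inferInstance
  set F := univ.filter (fun j : Fin m => (j : ℕ) < p) with hF
  -- first block
  have hfirst : ∀ j : Fin m, (j : ℕ) < p → σ1 j = σ2 j := by
    have range_eq : ∀ (σ : Equiv.Perm (Fin m)),
        Set.range (fun i : Fin p => σ (Fin.castLE hp i)) = ↑(Finset.image σ F) := by
      intro σ
      ext y
      simp only [Set.mem_range, Finset.coe_image, Set.mem_image, Finset.mem_coe, hF,
        Finset.mem_filter, Finset.mem_univ, true_and]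
      constructor
      · rintro ⟨i, rfl⟩
        exact ⟨Fin.castLE hp i, i.isLt, rfl⟩
      · rintro ⟨j, hj, rfl⟩
        exact ⟨⟨(j : ℕ), hj⟩, rfl⟩
    have sm : ∀ (σ : Equiv.Perm (Fin m)),
        (∀ i j : Fin m, i < j → ((j : ℕ) < p ∨ p ≤ (i : ℕ)) → σ i < σ j) →
        StrictMono (fun i : Fin p => σ (Fin.castLE hp i)) := by
      intro σ hσ i i' hii
      exact hσ _ _ (by exact hii) (Or.inl i'.isLt)
    have sm1 := sm σ1 h1
    have sm2 := sm σ2 h2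
    have instp : WellFoundedLT (Fin p) := inferInstance
    have heqf : (fun i : Fin p => σ1 (Fin.castLE hp i)) = (fun i : Fin p => σ2 (Fin.castLE hp i)) :=
      (sm1.range_inj sm2).1 (by rw [range_eq, range_eq, him])
    intro j hj
    have := congrFun heqf ⟨(j : ℕ), hj⟩
    simpa [Fin.ext_iff] using this
  -- second block
  have hsecond : ∀ j : Fin m, p ≤ (j : ℕ) → σ1 j = σ2 j := by
    have hcomp : ∀ (σ : Equiv.Perm (Fin m)) (hb : ∀ j : Fin m, (j : ℕ) < p → σ1 j = σ1 j),
        True := fun _ _ => trivial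
    have range_eq : ∀ (σ : Equiv.Perm (Fin m)),
        Set.range (fun i : Fin (m - p) => σ ⟨p + (i : ℕ), by have := i.isLt; omega⟩) =
          ↑((Finset.image σ F)ᶜ) := by
      intro σ
      ext y
      simp only [Set.mem_range, Finset.coe_compl, Set.mem_compl_iff, Finset.mem_coe,
        Finset.mem_image, hF, Finset.mem_filter, Finset.mem_univ, true_and, not_exists]
      constructor
      · rintro ⟨i, rfl⟩ j hj
        have := σ.injective hj.2.symm
        have hv := congrArg Fin.val this
        simp only at hv
        omega
      · intro hy
        set k := σ.symm y with hk
        have hky : σ k = y := σ.apply_symm_apply y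
        have hkp : ¬ (k : ℕ) < p := fun h => hy k ⟨h, hky⟩
        refine ⟨⟨(k : ℕ) - p, by have := k.isLt; omega⟩, ?_⟩
        rw [show (⟨p + ((k : ℕ) - p), _⟩ : Fin m) = k from Fin.ext (by simp; omega)]
        exact hky
    have sm : ∀ (σ : Equiv.Perm (Fin m)),
        (∀ i j : Fin m, i < j → ((j : ℕ) < p ∨ p ≤ (i : ℕ)) → σ i < σ j) →
        StrictMono (fun i : Fin (m - p) => σ ⟨p + (i : ℕ), by have := i.isLt; omega⟩) := by
      intro σ hσ i i' hii
      refine hσ _ _ ?_ (Or.inr (by simp))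
      have : (i : ℕ) < (i' : ℕ) := hii
      exact Fin.lt_def.2 (by simp; omega)
    have sm1 := sm σ1 h1
    have sm2 := sm σ2 h2
    have instmp : WellFoundedLT (Fin (m - p)) := inferInstance
    have heqf := (sm1.range_inj sm2).1 (by rw [range_eq, range_eq, him])
    intro j hj
    have := congrFun heqf ⟨(j : ℕ) - p, by have := j.isLt; omega⟩
    simp only at this
    rwa [show (⟨p + ((j : ℕ) - p), _⟩ : Fin m) = j from Fin.ext (by simp; omega)] at this
  refine Equiv.ext fun j => ?_
  rcases lt_or_ge ((j : ℕ)) p with hj | hj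
  · exact hfirst j hj
  · exact hsecond j hj

lemma nestedBracket_eq_sum {K : Type*} [Field K] {g : Type*} [AddCommGroup g] [Module K g]
    {m : ℕ} (b : (Fin m → g) → g) (N : Module.End K g) (j : ℕ) (x : Fin m → g) :
    nestedBracket b N j x =
      ∑ k ∈ Finset.range (j + 1), (-1 : ℤ) ^ (j - k) •
        (N ^ (j - k)) (∑ S ∈ Finset.powersetCard k (Finset.univ : Finset (Fin m)),
          b (fun i => if i ∈ S then N (x i) else x i)) := by
  induction j with
  | zero =>
      simp [nestedBracket, Finset.powersetCard_zero]
  | succ j ih =>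
      show (∑ S ∈ Finset.powersetCard (j + 1) (Finset.univ : Finset (Fin m)),
          b (fun i => if i ∈ S then N (x i) else x i)) - N (nestedBracket b N j x) = _
      rw [ih, map_sum,
        Finset.sum_range_succ (fun k => (-1 : ℤ) ^ (j + 1 - k) •
          (N ^ (j + 1 - k)) (∑ S ∈ Finset.powersetCard k (Finset.univ : Finset (Fin m)),
            b (fun i => if i ∈ S then N (x i) else x i))) (j + 1)]
      have hlast : (-1 : ℤ) ^ (j + 1 - (j + 1)) •
          (N ^ (j + 1 - (j + 1))) (∑ S ∈ Finset.powersetCard (j+1) (Finset.univ : Finset (Fin m)),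
            b (fun i => if i ∈ S then N (x i) else x i)) =
          ∑ S ∈ Finset.powersetCard (j+1) (Finset.univ : Finset (Fin m)),
            b (fun i => if i ∈ S then N (x i) else x i) := by
        simp
      rw [hlast, sub_eq_add_neg, add_comm]
      congr 1
      rw [← Finset.sum_neg_distrib]
      apply Finset.sum_congr rfl
      intro k hk
      rw [Finset.mem_range] at hk
      have h1 : j + 1 - k = (j - k) + 1 := by omega
      rw [map_zsmul, h1, pow_succ', pow_succ', Module.End.mul_apply, neg_one_mul, neg_smul]


lemma inner_sum_eq {K : Type*} [Field K] {g : Type*} [AddCommGroup g] [Module K g]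
    {m : ℕ} (b : (Fin m → g) → g) (hb : IsSkewMultilinear K b) (N : Module.End K g)
    (p : ℕ) (hp : p ≤ m) (x : Fin m → g) :
    ∑ σ ∈ Finset.univ.filter (fun σ : Equiv.Perm (Fin m) =>
        ∀ i j : Fin m, i < j → ((j : ℕ) < p ∨ p ≤ (i : ℕ)) → σ i < σ j),
      ((-1 : ℤ) ^ (p * (p - 1) / 2 +
          ∑ j ∈ Finset.univ.filter (fun j : Fin m => (j : ℕ) < p), ((σ j : ℕ) + 1))) •
        (N ^ p) (b (fun j => if (j : ℕ) < p then x (σ j) else N (x (σ j)))) =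
    (-1 : ℤ) ^ p • (N ^ p) (∑ T ∈ Finset.powersetCard (m - p) (Finset.univ : Finset (Fin m)),
        b (fun i => if i ∈ T then N (x i) else x i)) := by
  rw [map_sum, Finset.smul_sum]
  refine Finset.sum_bij
    (i := fun σ _ => (Finset.image σ (univ.filter (fun j : Fin m => (j : ℕ) < p)))ᶜ)
    ?_ ?_ ?_ ?_
  · intro σ hσ
    rw [Finset.mem_powersetCard_univ, Finset.card_compl,
      Finset.card_image_of_injective _ σ.injective, card_filter_lt hp, Fintype.card_fin]
  · intro σ1 h1 σ2 h2 heq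
    rw [Finset.mem_filter] at h1 h2
    exact unshuffle_ext hp σ1 σ2 h1.2 h2.2 (compl_injective heq)
  · intro T hT
    rw [Finset.mem_powersetCard_univ] at hT
    have hTc : Tᶜ.card = p := by
      rw [Finset.card_compl, hT, Fintype.card_fin]; omega
    obtain ⟨σ, hσ, himg⟩ := exists_unshuffle hp Tᶜ hTc
    refine ⟨σ, Finset.mem_filter.2 ⟨Finset.mem_univ _, hσ⟩, ?_⟩
    show (Finset.image σ (univ.filter (fun j : Fin m => (j : ℕ) < p)))ᶜ = T
    rw [himg, compl_compl]
  · intro σ hσmem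
    have hσ := (Finset.mem_filter.1 hσmem).2
    set F := univ.filter (fun j : Fin m => (j : ℕ) < p) with hF
    set S := Finset.image σ F with hS
    have harg : (fun j : Fin m => if (j : ℕ) < p then x (σ j) else N (x (σ j))) =
        (fun i => if i ∈ Sᶜ then N (x i) else x i) ∘ ⇑σ := by
      funext j
      simp only [Function.comp_apply]
      by_cases hj : (j : ℕ) < p
      · have hmem : σ j ∈ S := Finset.mem_image.2 ⟨j, by simp [hF, hj], rfl⟩
        rw [if_pos hj, if_neg (by simpa using hmem)]
      · have hmem : σ j ∉ S := by
          rw [hS, Finset.mem_image]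
          rintro ⟨j', hj', heq⟩
          rw [hF, Finset.mem_filter] at hj'
          exact hj (σ.injective heq ▸ hj'.2)
        rw [if_neg hj, if_pos (Finset.mem_compl.2 hmem)]
    rw [harg, skew_perm b hb _ σ,
      sign_unshuffle_aux m p (∑ j ∈ univ.filter (fun j : Fin m => (j : ℕ) < p), ((σ j : ℕ)))
        σ hσ rfl, map_zsmul, smul_smul]
    congr 1
    set w := ∑ j ∈ univ.filter (fun j : Fin m => (j : ℕ) < p), ((σ j : ℕ)) with hw
    have hw0 : (∑ j ∈ univ.filter (fun j : Fin m => (j : ℕ) < p), (j : ℕ)) = p * (p - 1) / 2 :=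
      sum_filter_lt hp
    have hsum : (∑ j ∈ univ.filter (fun j : Fin m => (j : ℕ) < p), ((σ j : ℕ) + 1)) = w + p := by
      rw [Finset.sum_add_distrib, Finset.sum_const, card_filter_lt hp, smul_eq_mul, mul_one]
    rw [hsum, hw0, ← pow_add]
    have hexp : p * (p - 1) / 2 + (w + p) + (w + p * (p - 1) / 2) =
        p + 2 * (w + p * (p - 1) / 2) := by omega
    rw [hexp, pow_add, pow_mul, neg_one_sq, one_pow, mul_one]

/-- `N` is a Nijenhuis operator on the `(n+1)`-Lie algebra `(g, b)`
iff for all `x₁,…,x_{n+1} ∈ g`,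
`∑_{p=0}^{n+1} ∑_σ (−1)^{p(p−1)/2 + ∑_{j≤p} σ(j)} N^p [x_{σ(1)},…,x_{σ(p)}, Nx_{σ(p+1)},…, Nx_{σ(n+1)}] = 0`,
summing over `(p, n+1−p)`-unshuffles `σ` (1-indexed in the paper; here 0-indexed,
so the paper's `σ(j)` is `(σ j : ℕ) + 1`). -/
theorem isNijenhuis_iff_unshuffle_identity
    {K : Type*} [Field K] {g : Type*} [AddCommGroup g] [Module K g]
    {n : ℕ} (b : (Fin (n + 1) → g) → g) (hb : IsNLieBracket K b)
    (N : Module.End K g) :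
    IsNijenhuis b N ↔
    (∀ x : Fin (n + 1) → g,
      ∑ p ∈ Finset.range (n + 2),
        ∑ σ ∈ Finset.univ.filter (fun σ : Equiv.Perm (Fin (n + 1)) =>
            ∀ i j : Fin (n + 1), i < j → ((j : ℕ) < p ∨ p ≤ (i : ℕ)) → σ i < σ j),
          ((-1 : ℤ) ^ (p * (p - 1) / 2 +
              ∑ j ∈ Finset.univ.filter (fun j : Fin (n + 1) => (j : ℕ) < p), ((σ j : ℕ) + 1))) •
            (N ^ p) (b (fun j => if (j : ℕ) < p then x (σ j) else N (x (σ j)))) = 0) := by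

  obtain ⟨hsk, -⟩ := hb
  have key : ∀ x : Fin (n + 1) → g,
      (∑ p ∈ Finset.range (n + 2),
        ∑ σ ∈ Finset.univ.filter (fun σ : Equiv.Perm (Fin (n + 1)) =>
            ∀ i j : Fin (n + 1), i < j → ((j : ℕ) < p ∨ p ≤ (i : ℕ)) → σ i < σ j),
          ((-1 : ℤ) ^ (p * (p - 1) / 2 +
              ∑ j ∈ Finset.univ.filter (fun j : Fin (n + 1) => (j : ℕ) < p), ((σ j : ℕ) + 1))) •
            (N ^ p) (b (fun j => if (j : ℕ) < p then x (σ j) else N (x (σ j))))) =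
      b (fun i => N (x i)) - N (nestedBracket b N n x) := by
    intro x
    set A : ℕ → g := fun k => ∑ S ∈ Finset.powersetCard k (Finset.univ : Finset (Fin (n + 1))),
      b (fun i => if i ∈ S then N (x i) else x i) with hA
    have step1 : ∀ p ∈ Finset.range (n + 2),
        (∑ σ ∈ Finset.univ.filter (fun σ : Equiv.Perm (Fin (n + 1)) =>
            ∀ i j : Fin (n + 1), i < j → ((j : ℕ) < p ∨ p ≤ (i : ℕ)) → σ i < σ j),
          ((-1 : ℤ) ^ (p * (p - 1) / 2 +
              ∑ j ∈ Finset.univ.filter (fun j : Fin (n + 1) => (j : ℕ) < p), ((σ j : ℕ) + 1))) •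
            (N ^ p) (b (fun j => if (j : ℕ) < p then x (σ j) else N (x (σ j))))) =
        (-1 : ℤ) ^ p • (N ^ p) (A (n + 1 - p)) := by
      intro p hp
      rw [Finset.mem_range] at hp
      exact inner_sum_eq b hsk N p (by omega) x
    rw [Finset.sum_congr rfl step1]
    rw [← Finset.sum_range_reflect (fun p => (-1 : ℤ) ^ p • (N ^ p) (A (n + 1 - p))) (n + 2)]
    have step2 : ∀ k ∈ Finset.range (n + 2),
        (-1 : ℤ) ^ (n + 2 - 1 - k) • (N ^ (n + 2 - 1 - k)) (A (n + 1 - (n + 2 - 1 - k))) =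
        (-1 : ℤ) ^ (n + 1 - k) • (N ^ (n + 1 - k)) (A k) := by
      intro k hk
      rw [Finset.mem_range] at hk
      have h1 : n + 2 - 1 - k = n + 1 - k := by omega
      have h2 : n + 1 - (n + 1 - k) = k := by omega
      rw [h1, h2]
    rw [Finset.sum_congr rfl step2, Finset.sum_range_succ]
    have hlast : (-1 : ℤ) ^ (n + 1 - (n + 1)) • (N ^ (n + 1 - (n + 1))) (A (n + 1)) =
        b (fun i => N (x i)) := by
      have hcard : (n + 1) = (Finset.univ : Finset (Fin (n + 1))).card := by simp
      have : A (n + 1) = b (fun i => N (x i)) := by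
        rw [hA]
        simp only [hcard, Finset.powersetCard_self, Finset.sum_singleton]
        congr 1
        funext i
        rw [if_pos (Finset.mem_univ i)]
      simp [this]
    rw [hlast]
    have step3 : (∑ k ∈ Finset.range (n + 1),
        (-1 : ℤ) ^ (n + 1 - k) • (N ^ (n + 1 - k)) (A k)) =
        - N (nestedBracket b N n x) := by
      rw [nestedBracket_eq_sum, map_sum, ← Finset.sum_neg_distrib]
      apply Finset.sum_congr rfl
      intro k hk
      rw [Finset.mem_range] at hk
      have h1 : n + 1 - k = (n - k) + 1 := by omega
      rw [map_zsmul, h1, pow_succ', pow_succ', Module.End.mul_apply, neg_one_mul, neg_smul]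
    rw [step3]
    abel
  constructor
  · intro h x
    rw [key x]
    exact sub_eq_zero.mpr (h x)
  · intro h x
    have := h x
    rw [key x] at this
    exact sub_eq_zero.mp this
end

section
/- Let g = ℂ³ with basis e₁, e₂, e₃, equipped with the trilinear skew-symmetric bracket determined by [e₁,e₂,e₃] = e₁ (this is a 3-Lie algebra; up to isomorphism it is the unique 3-dimensional non-abelian complex 3-Lie algebra). Then every linear map N : g → g is a Nijenhuis operator on g, i.e. [Nx, Ny, Nz] = N([x,y,z]_N²) for all x, y, z ∈ g. -/
/-- The 3-dimensional complex 3-Lie algebra: the trilinear skew-symmetric bracket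
on `ℂ³` determined by `[e₁, e₂, e₃] = e₁` (for general vectors it is the
determinant of the coordinates times `e₁`). -/
noncomputable def threeDimBracket (x y z : Fin 3 → ℂ) : Fin 3 → ℂ :=
  (x 0 * (y 1 * z 2) - x 0 * (y 2 * z 1) - x 1 * (y 0 * z 2) + x 1 * (y 2 * z 0)
      + x 2 * (y 0 * z 1) - x 2 * (y 1 * z 0)) • (Pi.single 0 1 : Fin 3 → ℂ)

/-- `N` is a Nijenhuis operator on the 3-Lie algebra `(A, br)`:
`[Nx,Ny,Nz] = N([x,y,z]_N²)` where
`[x,y,z]_N¹ = [Nx,y,z] + [x,Ny,z] + [x,y,Nz] − N[x,y,z]` and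
`[x,y,z]_N² = [Nx,Ny,z] + [Nx,y,Nz] + [x,Ny,Nz] − N([x,y,z]_N¹)`. -/
def IsNijenhuis3 (K : Type*) [Field K] {A : Type*} [AddCommGroup A] [Module K A]
    (br : A → A → A → A) (N : A →ₗ[K] A) : Prop :=
  ∀ x y z : A,
    br (N x) (N y) (N z)
      = N (br (N x) (N y) z + br (N x) y (N z) + br x (N y) (N z)
          - N (br (N x) y z + br x (N y) z + br x y (N z) - N (br x y z)))

set_option maxHeartbeats 4000000 in
/-- Every linear map on the 3-dimensional non-abelian complex
3-Lie algebra (with `[e₁,e₂,e₃] = e₁`) is a Nijenhuis operator. -/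
theorem every_linear_map_is_nijenhuis_threeDim
    (N : (Fin 3 → ℂ) →ₗ[ℂ] (Fin 3 → ℂ)) :
    IsNijenhuis3 ℂ threeDimBracket N := by
  intro x y z
  set A := N (Pi.single 0 1) with hA
  set B := N (Pi.single 1 1) with hB
  set C := N (Pi.single 2 1) with hC
  have hN : ∀ v : Fin 3 → ℂ, N v = v 0 • A + v 1 • B + v 2 • C := by
    intro v
    rw [hA, hB, hC, ← map_smul, ← map_smul, ← map_smul, ← map_add, ← map_add]
    congr 1
    funext i
    fin_cases i <;> simp
  simp only [threeDimBracket, hN]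
  funext i
  fin_cases i <;>
    simp [Pi.single_apply, Fin.ext_iff] <;> ring
end

section
/- Let (g, [·,…,·]) be an n-Lie algebra over a field K and (V; ρ) a representation of g, and equip g ⊕ V with the semidirect product n-Lie bracket [x₁+v₁,…,xₙ+vₙ] = [x₁,…,xₙ] + Σ_{i=1}^{n} (−1)^{n−i} ρ(x₁,…,x̂ᵢ,…,xₙ)(vᵢ). Then a linear map T : V → g is an O-operator if and only if the linear map T̄ : g ⊕ V → g ⊕ V defined by T̄(x + v) = Tv + 0 (i.e. the block matrix (0 T; 0 0)) is a Nijenhuis operator on the semidirect product n-Lie algebra g ⋉_ρ V. -/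
open Finset

/-- The semidirect product bracket on `g ⊕ V` associated to an `(n+2)`-ary bracket `b`
on `g` and a representation `ρ : g^{n+1} → End V`:
`[x₁+v₁,…,x_{n+2}+v_{n+2}] = [x₁,…,x_{n+2}] + ∑ᵢ (−1)^{(n+2)−i} ρ(x₁,…,x̂ᵢ,…,x_{n+2})(vᵢ)`. -/
def semidirectBracket {K : Type*} [Field K] {g V : Type*} [AddCommGroup g] [Module K g]
    [AddCommGroup V] [Module K V] {n : ℕ} (b : (Fin (n + 2) → g) → g)
    (ρ : (Fin (n + 1) → g) → Module.End K V) (w : Fin (n + 2) → g × V) : g × V :=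
  (b (fun i => (w i).1),
   ∑ i : Fin (n + 2),
     ((-1 : ℤ) ^ (n + 2 - ((i : ℕ) + 1))) • ρ (fun j => (w (i.succAbove j)).1) ((w i).2))

/-- Let `(g, b)` be an `(n+2)`-Lie algebra and `(V, ρ)` a
representation.  A linear map `T : V → g` is an `𝒪`-operator iff
`T̄ = (0 T; 0 0) : g ⊕ V → g ⊕ V`, `x + v ↦ Tv`, is a Nijenhuis operator on the
semidirect product `(n+2)`-Lie algebra `g ⋉_ρ V`. -/
theorem oOperator_iff_nijenhuis_on_semidirect
    {K : Type*} [Field K] {g V : Type*} [AddCommGroup g] [Module K g]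
    [AddCommGroup V] [Module K V] {n : ℕ}
    (b : (Fin (n + 2) → g) → g) (hb : IsNLieBracket K b)
    (ρ : (Fin (n + 1) → g) → Module.End K V)
    (hρskew : IsSkewMultilinear K ρ)
    (hρ1 : ∀ X Y : Fin (n + 1) → g,
      ρ X * ρ Y - ρ Y * ρ X
        = ∑ i : Fin (n + 1), ρ (Function.update Y i (b (Fin.snoc X (Y i)))))
    (hρ2 : ∀ (x : Fin n → g) (y : Fin (n + 2) → g),
      ρ (Fin.snoc x (b y))
        = ∑ i : Fin (n + 2),
            ((-1 : ℤ) ^ (n + 2 - ((i : ℕ) + 1))) •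
              (ρ (fun j => y (i.succAbove j)) * ρ (Fin.snoc x (y i))))
    (T : V →ₗ[K] g) :
    (∀ v : Fin (n + 2) → V,
        b (fun i => T (v i))
          = ∑ i : Fin (n + 2),
              ((-1 : ℤ) ^ (n + 2 - ((i : ℕ) + 1))) •
                T (ρ (fun j => T (v (i.succAbove j))) (v i))) ↔
    IsNijenhuis (semidirectBracket b ρ)
      ((LinearMap.inl K g V).comp (T.comp (LinearMap.snd K g V))) := by
  classical
  set N : Module.End K (g × V) :=
    (LinearMap.inl K g V).comp (T.comp (LinearMap.snd K g V)) with hNdef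
  have hNapp : ∀ p : g × V, N p = (T p.2, 0) := fun _ => rfl
  have hNN : ∀ p : g × V, N (N p) = 0 := by
    intro p
    simp [hNapp, Prod.ext_iff]
  have hterm : ∀ (w : Fin (n+2) → g × V) (i : Fin (n+2)),
      N (semidirectBracket b ρ
          (fun k => if k ∈ ({i}ᶜ : Finset (Fin (n+2))) then N (w k) else w k))
        = (((-1:ℤ)^(n+2-((i:ℕ)+1))) •
            T (ρ (fun j => T ((w (i.succAbove j)).2)) ((w i).2)), 0) := by
    intro w i
    rw [hNapp]
    refine Prod.ext ?_ rfl
    show T ((semidirectBracket b ρ _).2) = _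
    simp only [semidirectBracket]
    rw [Fintype.sum_eq_single i ?_]
    · have h1 : (fun j => (if i.succAbove j ∈ ({i}ᶜ : Finset (Fin (n+2))) then
            N (w (i.succAbove j)) else w (i.succAbove j)).1)
          = fun j => T ((w (i.succAbove j)).2) := by
        funext j
        rw [if_pos (by simp [Fin.succAbove_ne]), hNapp]
      have h2 : (if i ∈ ({i}ᶜ : Finset (Fin (n+2))) then N (w i) else w i).2 = (w i).2 := by
        rw [if_neg (by simp)]
      rw [h1, h2, map_zsmul]
    · intro k hk
      have h2 : (if k ∈ ({i}ᶜ : Finset (Fin (n+2))) then N (w k) else w k).2 = 0 := by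
        simp [Finset.mem_compl, Finset.mem_singleton, hk, hNapp]
      rw [h2]
      simp
  have hinj : Function.Injective (fun i : Fin (n+2) => ({i}ᶜ : Finset (Fin (n+2)))) := by
    intro i j h
    simpa using compl_injective h
  have himage : (Finset.powersetCard (n+1) (Finset.univ : Finset (Fin (n+2))))
      = Finset.univ.image (fun i : Fin (n+2) => ({i}ᶜ : Finset (Fin (n+2)))) := by
    ext S
    simp only [Finset.mem_powersetCard_univ, Finset.mem_image, Finset.mem_univ, true_and]
    constructor
    · intro hS
      have hc : Sᶜ.card = 1 := by
        rw [Finset.card_compl, hS]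
        simp
      obtain ⟨i, hi⟩ := Finset.card_eq_one.mp hc
      exact ⟨i, by rw [← compl_compl S, hi]⟩
    · rintro ⟨i, rfl⟩
      rw [Finset.card_compl]
      simp
  have key : ∀ w : Fin (n+2) → g × V,
      N (nestedBracket (semidirectBracket b ρ) N (n+1) w)
        = (∑ i : Fin (n+2), ((-1:ℤ)^(n+2-((i:ℕ)+1))) •
            T (ρ (fun j => T ((w (i.succAbove j)).2)) ((w i).2)), 0) := by
    intro w
    have hunf : nestedBracket (semidirectBracket b ρ) N (n+1) w
        = (∑ S ∈ Finset.powersetCard (n+1) (Finset.univ : Finset (Fin (n+2))),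
            semidirectBracket b ρ (fun i => if i ∈ S then N (w i) else w i))
          - N (nestedBracket (semidirectBracket b ρ) N n w) := rfl
    rw [hunf, map_sub, hNN, sub_zero, map_sum, himage, Finset.sum_image (fun a _ b _ h => hinj h)]
    simp only [hterm]
    refine Prod.ext ?_ ?_
    · rw [Prod.fst_sum]
    · rw [Prod.snd_sum]
      simp
  have hlhs : ∀ w : Fin (n+2) → g × V,
      semidirectBracket b ρ (fun i => N (w i)) = (b (fun i => T ((w i).2)), 0) := by
    intro w
    simp [semidirectBracket, hNapp]
  constructor
  · intro hO w
    rw [hlhs, key, Prod.mk.injEq]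
    exact ⟨hO (fun i => (w i).2), rfl⟩
  · intro hNij v
    have h := hNij (fun i => ((0:g), v i))
    rw [hlhs, key] at h
    exact congrArg Prod.fst h
end

section
/- Let (g, [·,…,·]) be an n-Lie algebra over a field K and let f : g → K be a linear functional satisfying f([x₁,…,xₙ]) = 0 for all x₁,…,xₙ ∈ g. Then the (n+1)-linear bracket defined by {x₁,…,x_{n+1}} = Σ_{i=1}^{n+1} (−1)^{i−1} f(xᵢ) [x₁,…,x̂ᵢ,…,x_{n+1}] (where x̂ᵢ means xᵢ is omitted) is skew-symmetric and satisfies the Filippov identity, i.e. (g, {·,…,·}) is an (n+1)-Lie algebra. -/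
open Finset

lemma val_succAbove {m : ℕ} (p : Fin (m + 1)) (t : Fin m) :
    ((p.succAbove t : Fin (m + 1)) : ℕ) = if (t : ℕ) < (p : ℕ) then (t : ℕ) else (t : ℕ) + 1 := by
  rw [Fin.succAbove]
  split_ifs with h1 h2 h2 <;> simp_all [Fin.lt_def, Fin.coe_castSucc, Fin.val_succ]

lemma val_predAbove {m : ℕ} (q : Fin (m + 1)) (i : Fin (m + 2)) :
    ((q.predAbove i : Fin (m + 1)) : ℕ) = if (q : ℕ) < (i : ℕ) then (i : ℕ) - 1 else (i : ℕ) := by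
  rw [Fin.predAbove]
  rcases lt_or_ge (q : ℕ) (i : ℕ) with h | h
  · rw [dif_pos (by rwa [Fin.lt_def, Fin.coe_castSucc]), if_pos h, Fin.coe_pred]
  · rw [dif_neg (by rw [Fin.lt_def, Fin.coe_castSucc]; omega), if_neg (by omega), Fin.coe_castPred]

lemma sA_pA {m : ℕ} (i : Fin (m + 2)) (j : Fin (m + 1)) :
    (i.succAbove j).succAbove (j.predAbove i) = i := by
  have hj := j.isLt; have hi := i.isLt
  apply Fin.ext
  rw [val_succAbove, val_predAbove, val_succAbove]
  split_ifs <;> omega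

lemma pA_sA {m : ℕ} (i : Fin (m + 2)) (j : Fin (m + 1)) :
    (j.predAbove i).predAbove (i.succAbove j) = j := by
  have hj := j.isLt; have hi := i.isLt
  apply Fin.ext
  rw [val_predAbove, val_predAbove, val_succAbove]
  split_ifs <;> omega

-- F6
lemma comp_update_sA {m : ℕ} {g : Type*} (y : Fin (m + 1) → g) (p : Fin (m + 1)) (j : Fin m) (w : g) :
    (fun t => Function.update y (p.succAbove j) w (p.succAbove t))
      = Function.update (fun t => y (p.succAbove t)) j w := by
  funext t
  by_cases h : t = j
  · subst h; simp
  · rw [Function.update_of_ne (fun hc => h (p.succAbove_right_injective hc)),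
      Function.update_of_ne h]

-- F7
lemma comp_update_self_sA {m : ℕ} {g : Type*} (y : Fin (m + 1) → g) (p : Fin (m + 1)) (w : g) :
    (fun t => Function.update y p w (p.succAbove t)) = fun t => y (p.succAbove t) := by
  funext t
  exact Function.update_of_ne (p.succAbove_ne t) _ _

-- F8
lemma snoc_comp_sA {m : ℕ} {g : Type*} (x : Fin (m + 1) → g) (w : g) (k : Fin (m + 1)) :
    (fun t => (Fin.snoc x w : Fin (m + 2) → g) (k.castSucc.succAbove t))
      = Fin.snoc (fun t => x (k.succAbove t)) w := by
  funext t
  refine Fin.lastCases ?_ (fun t' => ?_) t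
  · have h1 : k.castSucc.succAbove (Fin.last m) = Fin.last (m + 1) := by
      apply Fin.ext
      rw [val_succAbove]
      simp only [Fin.val_last, Fin.coe_castSucc]
      have := k.isLt; split_ifs <;> omega
    rw [h1]
    simp
  · have h1 : k.castSucc.succAbove t'.castSucc = (k.succAbove t').castSucc := by
      apply Fin.ext
      simp only [Fin.coe_castSucc, val_succAbove]
    rw [h1]
    simp

-- F9
lemma snoc_comp_last {m : ℕ} {g : Type*} (x : Fin (m + 1) → g) (w : g) :
    (fun t => (Fin.snoc x w : Fin (m + 2) → g) ((Fin.last (m + 1)).succAbove t)) = x := by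
  funext t
  rw [Fin.succAbove_last]
  simp
section BLemmas
variable {K : Type*} [Field K] {g W : Type*} [AddCommGroup g] [Module K g]
  [AddCommGroup W] [Module K W]

lemma b_update_zero {m : ℕ} {b : (Fin m → g) → W}
    (hs : ∀ (x : Fin m → g) (i : Fin m) (c : K) (u : g),
      b (Function.update x i (c • u)) = c • b (Function.update x i u))
    (x : Fin m → g) (i : Fin m) : b (Function.update x i 0) = 0 := by
  have h := hs x i 0 0
  rw [zero_smul, zero_smul] at h
  exact h

lemma b_update_sum {m : ℕ} {b : (Fin m → g) → W}
    (ha : ∀ (x : Fin m → g) (i : Fin m) (u v : g),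
      b (Function.update x i (u + v)) = b (Function.update x i u) + b (Function.update x i v))
    (hs : ∀ (x : Fin m → g) (i : Fin m) (c : K) (u : g),
      b (Function.update x i (c • u)) = c • b (Function.update x i u))
    {ι : Type*} (x : Fin m → g) (i : Fin m) (s : Finset ι) (a : ι → K) (v : ι → g) :
    b (Function.update x i (∑ t ∈ s, a t • v t)) = ∑ t ∈ s, a t • b (Function.update x i (v t)) := by
  classical
  induction s using Finset.induction with
  | empty => simpa using b_update_zero hs x i
  | insert _ _ hnot ih =>
      rw [Finset.sum_insert hnot, ha, hs, ih, Finset.sum_insert hnot]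

lemma b_swap {m : ℕ} {b : (Fin m → g) → W}
    (ha : ∀ (x : Fin m → g) (i : Fin m) (u v : g),
      b (Function.update x i (u + v)) = b (Function.update x i u) + b (Function.update x i v))
    (halt : ∀ (x : Fin m → g) (i j : Fin m), i ≠ j → x i = x j → b x = 0)
    (x : Fin m → g) {i j : Fin m} (hij : i ≠ j) (u v : g) :
    b (Function.update (Function.update x i u) j v)
      = - b (Function.update (Function.update x i v) j u) := by
  have h0 : b (Function.update (Function.update x i (u + v)) j (u + v)) = 0 := by
    refine halt _ i j hij ?_
    rw [Function.update_of_ne hij, Function.update_self, Function.update_self]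
  rw [ha] at h0
  rw [Function.update_comm hij (u + v) u x, Function.update_comm hij (u + v) v x, ha, ha] at h0
  have z1 : b (Function.update (Function.update x j u) i u) = 0 := by
    refine halt _ i j hij ?_
    rw [Function.update_self, Function.update_of_ne hij.symm, Function.update_self]
  have z2 : b (Function.update (Function.update x j v) i v) = 0 := by
    refine halt _ i j hij ?_
    rw [Function.update_self, Function.update_of_ne hij.symm, Function.update_self]
  rw [z1, z2, zero_add, add_zero] at h0
  rw [Function.update_comm hij u v x, Function.update_comm hij v u x]
  exact eq_neg_of_add_eq_zero_right h0

lemma b_cancel_lt {m : ℕ} {b : (Fin (m + 1) → g) → W}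
    (ha : ∀ (x : Fin (m + 1) → g) (i : Fin (m + 1)) (u v : g),
      b (Function.update x i (u + v)) = b (Function.update x i u) + b (Function.update x i v))
    (halt : ∀ (x : Fin (m + 1) → g) (i j : Fin (m + 1)), i ≠ j → x i = x j → b x = 0) :
    ∀ (d : ℕ) (Y : Fin (m + 2) → g) (i p : Fin (m + 2)), (p : ℕ) = (i : ℕ) + (d + 1) →
      Y i = Y p →
      ((-1 : K) ^ (i : ℕ)) • b (fun t => Y (i.succAbove t))
        = - (((-1 : K) ^ (p : ℕ)) • b (fun t => Y (p.succAbove t))) := by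
  intro d
  induction d with
  | zero =>
      intro Y i p hp hYip
      have hi := i.isLt; have hpl := p.isLt
      have hYs : (fun t => Y (i.succAbove t)) = fun t => Y (p.succAbove t) := by
        funext t
        rcases Nat.lt_trichotomy (t : ℕ) (i : ℕ) with h | h | h
        · congr 1
          apply Fin.ext
          rw [val_succAbove, val_succAbove]
          split_ifs <;> omega
        · have e1 : i.succAbove t = p := by
            apply Fin.ext; rw [val_succAbove]; split_ifs <;> omega
          have e2 : p.succAbove t = i := by
            apply Fin.ext; rw [val_succAbove]; split_ifs <;> omega
          rw [e1, e2]; exact hYip.symm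
        · congr 1
          apply Fin.ext
          rw [val_succAbove, val_succAbove]
          split_ifs <;> omega
      rw [hYs, hp, pow_succ, mul_neg_one, neg_smul, neg_neg]
  | succ d ih =>
      intro Y i p hp hYip
      have hi := i.isLt; have hpl := p.isLt
      have hple : (p : ℕ) - 1 < m + 2 := by omega
      set p' : Fin (m + 2) := ⟨(p : ℕ) - 1, hple⟩ with hp'
      have hp'v : (p' : ℕ) = (p : ℕ) - 1 := rfl
      set Y' := Function.update (Function.update Y p' (Y p)) p (Y p') with hY'
      have hY'eq : ∀ s : Fin (m + 2), s ≠ p' → s ≠ p → Y' s = Y s := by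
        intro s h1 h2
        rw [hY', Function.update_of_ne h2, Function.update_of_ne h1]
      have hp'p : p' ≠ p := Fin.ne_of_val_ne (by rw [hp'v]; omega)
      have hY'p' : Y' p' = Y p := by
        rw [hY', Function.update_of_ne hp'p, Function.update_self]
      have hY'p : Y' p = Y p' := by
        rw [hY', Function.update_self]
      have hY'i : Y' i = Y i :=
        hY'eq i (Fin.ne_of_val_ne (by rw [hp'v]; omega)) (Fin.ne_of_val_ne (by omega))
      have f3 : (fun t => Y' (p'.succAbove t)) = fun t => Y (p.succAbove t) := by
        funext t
        have ht := t.isLt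
        rcases Nat.lt_trichotomy (t : ℕ) ((p : ℕ) - 1) with h | h | h
        · have e1 : p'.succAbove t = p.succAbove t := by
            apply Fin.ext; rw [val_succAbove, val_succAbove, hp'v]; split_ifs <;> omega
          rw [e1]
          refine hY'eq _ ?_ ?_ <;>
            refine Fin.ne_of_val_ne ?_ <;> rw [val_succAbove] <;> (try rw [hp'v]) <;>
            split_ifs <;> omega
        · have e1 : p'.succAbove t = p := by
            apply Fin.ext; rw [val_succAbove, hp'v]; split_ifs <;> omega
          have e2 : p.succAbove t = p' := by
            apply Fin.ext; rw [val_succAbove, hp'v]; split_ifs <;> omega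
          rw [e1, e2, hY'p]
        · have e1 : p'.succAbove t = p.succAbove t := by
            apply Fin.ext; rw [val_succAbove, val_succAbove, hp'v]; split_ifs <;> omega
          rw [e1]
          refine hY'eq _ ?_ ?_ <;>
            refine Fin.ne_of_val_ne ?_ <;> rw [val_succAbove] <;> (try rw [hp'v]) <;>
            split_ifs <;> omega
      have f4 : b (fun t => Y' (i.succAbove t)) = - b (fun t => Y (i.succAbove t)) := by
        have hale : (p : ℕ) - 2 < m + 1 := by omega
        have ha'le : (p : ℕ) - 1 < m + 1 := by omega
        set a : Fin (m + 1) := ⟨(p : ℕ) - 2, hale⟩ with hadef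
        set a' : Fin (m + 1) := ⟨(p : ℕ) - 1, ha'le⟩ with ha'def
        have hav : (a : ℕ) = (p : ℕ) - 2 := rfl
        have ha'v : (a' : ℕ) = (p : ℕ) - 1 := rfl
        have haa' : a ≠ a' := Fin.ne_of_val_ne (by rw [hav, ha'v]; omega)
        have ea : i.succAbove a = p' := by
          apply Fin.ext; rw [val_succAbove, hav, hp'v]; split_ifs <;> omega
        have ea' : i.succAbove a' = p := by
          apply Fin.ext; rw [val_succAbove, ha'v]; split_ifs <;> omega
        have eq1 : (fun t => Y' (i.succAbove t))
            = Function.update (Function.update (fun t => Y (i.succAbove t)) a (Y p)) a' (Y p') := by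
          funext t
          by_cases h1 : t = a'
          · subst h1; rw [Function.update_self, ea', hY'p]
          · by_cases h2 : t = a
            · subst h2
              rw [Function.update_of_ne h1, Function.update_self, ea, hY'p']
            · rw [Function.update_of_ne h1, Function.update_of_ne h2]
              refine hY'eq _ ?_ ?_
              · intro hc; rw [← ea] at hc; exact h2 (i.succAbove_right_injective hc)
              · intro hc; rw [← ea'] at hc; exact h1 (i.succAbove_right_injective hc)
        have eq2 : (fun t => Y (i.succAbove t))
            = Function.update (Function.update (fun t => Y (i.succAbove t)) a (Y p')) a' (Y p) := by
          funext t
          by_cases h1 : t = a'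
          · subst h1; rw [Function.update_self, ea']
          · by_cases h2 : t = a
            · subst h2
              rw [Function.update_of_ne h1, Function.update_self, ea]
            · rw [Function.update_of_ne h1, Function.update_of_ne h2]
        rw [eq1, b_swap ha halt _ haa', ← eq2]
      have hIH := ih Y' i p' (by rw [hp'v]; omega)
        (by rw [hY'i, hY'p']; exact hYip)
      rw [f3, f4, smul_neg] at hIH
      have hIH2 : ((-1 : K) ^ (i : ℕ)) • b (fun t => Y (i.succAbove t))
          = ((-1 : K) ^ ((p : ℕ) - 1)) • b (fun t => Y (p.succAbove t)) := by
        have := neg_injective hIH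
        rwa [hp'v] at this
      have hpow : ((-1 : K)) ^ (p : ℕ) = -((-1 : K) ^ ((p : ℕ) - 1)) := by
        conv_lhs => rw [show (p : ℕ) = ((p : ℕ) - 1) + 1 by omega]
        rw [pow_succ, mul_neg_one]
      rw [hpow, neg_smul, neg_neg]
      exact hIH2

lemma b_cancel {m : ℕ} {b : (Fin (m + 1) → g) → W}
    (ha : ∀ (x : Fin (m + 1) → g) (i : Fin (m + 1)) (u v : g),
      b (Function.update x i (u + v)) = b (Function.update x i u) + b (Function.update x i v))
    (halt : ∀ (x : Fin (m + 1) → g) (i j : Fin (m + 1)), i ≠ j → x i = x j → b x = 0)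
    (Y : Fin (m + 2) → g) (i p : Fin (m + 2)) (hip : i ≠ p) (hY : Y i = Y p) :
    ((-1 : K) ^ (i : ℕ)) • b (fun t => Y (i.succAbove t))
      + ((-1 : K) ^ (p : ℕ)) • b (fun t => Y (p.succAbove t)) = 0 := by
  rcases Nat.lt_trichotomy (i : ℕ) (p : ℕ) with h | h | h
  · rw [b_cancel_lt ha halt ((p : ℕ) - (i : ℕ) - 1) Y i p (by omega) hY]
    exact neg_add_cancel _
  · exact absurd (Fin.ext h) hip
  · rw [b_cancel_lt ha halt ((i : ℕ) - (p : ℕ) - 1) Y p i (by omega) hY.symm, add_comm]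
    exact neg_add_cancel _
end BLemmas
section CLemmas
variable {K : Type*} [Field K] {g : Type*} [AddCommGroup g] [Module K g] {n : ℕ}

lemma b_snoc_sum {m : ℕ} {b : (Fin (m + 1) → g) → g}
    (ha : ∀ (x : Fin (m + 1) → g) (i : Fin (m + 1)) (u v : g),
      b (Function.update x i (u + v)) = b (Function.update x i u) + b (Function.update x i v))
    (hs : ∀ (x : Fin (m + 1) → g) (i : Fin (m + 1)) (c : K) (u : g),
      b (Function.update x i (c • u)) = c • b (Function.update x i u))
    (z : Fin m → g) {ι : Type*} (s : Finset ι) (a : ι → K) (v : ι → g) :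
    b (Fin.snoc z (∑ t ∈ s, a t • v t)) = ∑ t ∈ s, a t • b (Fin.snoc z (v t)) := by
  have h1 : ∀ w : g, (Fin.snoc z w : Fin (m + 1) → g)
      = Function.update (Fin.snoc z 0) (Fin.last m) w := fun w => (Fin.update_snoc_last _ _ _).symm
  rw [h1, b_update_sum ha hs]
  exact Finset.sum_congr rfl fun t _ => by rw [← h1]

/-- The extended bracket. -/
def Cmap (b : (Fin (n + 1) → g) → g) (f : g →ₗ[K] K) : (Fin (n + 2) → g) → g :=
  fun y : Fin (n + 2) → g =>
    ∑ i : Fin (n + 2), ((-1 : K) ^ (i : ℕ) * f (y i)) • b (fun j => y (i.succAbove j))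

lemma Cmap_apply (b : (Fin (n + 1) → g) → g) (f : g →ₗ[K] K) (y : Fin (n + 2) → g) :
    Cmap b f y
      = ∑ i : Fin (n + 2), ((-1 : K) ^ (i : ℕ) * f (y i)) • b (fun j => y (i.succAbove j)) := rfl

lemma C_f0 (b : (Fin (n + 1) → g) → g) (f : g →ₗ[K] K)
    (hf : ∀ x : Fin (n + 1) → g, f (b x) = 0) (z : Fin (n + 2) → g) :
    f (Cmap b f z) = 0 := by
  rw [Cmap_apply, map_sum]
  refine Finset.sum_eq_zero fun i _ => ?_
  rw [map_smul, hf, smul_zero]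

lemma C_snoc (b : (Fin (n + 1) → g) → g) (f : g →ₗ[K] K) (x : Fin (n + 1) → g) (w : g) :
    Cmap b f (Fin.snoc x w)
      = ∑ k : Fin (n + 1), ((-1 : K) ^ (k : ℕ) * f (x k))
            • b (Fin.snoc (fun t => x (k.succAbove t)) w)
        + ((-1 : K) ^ (n + 1) * f w) • b x := by
  rw [Cmap_apply, Fin.sum_univ_castSucc]
  congr 1
  · refine Finset.sum_congr rfl fun k _ => ?_
    rw [Fin.coe_castSucc, Fin.snoc_castSucc, snoc_comp_sA]
  · rw [Fin.val_last, Fin.snoc_last, snoc_comp_last]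

lemma C_update (b : (Fin (n + 1) → g) → g) (f : g →ₗ[K] K)
    (y : Fin (n + 2) → g) (p : Fin (n + 2)) (w : g) (hw : f w = 0) :
    Cmap b f (Function.update y p w)
      = ∑ q : Fin (n + 1),
          ((-1 : K) ^ ((p.succAbove q : Fin (n + 2)) : ℕ) * f (y (p.succAbove q)))
            • b (Function.update (fun s => y ((p.succAbove q).succAbove s)) (q.predAbove p) w) := by
  rw [Cmap_apply, Fin.sum_univ_succAbove _ p, Function.update_self, hw, mul_zero, zero_smul,
    zero_add]
  refine Finset.sum_congr rfl fun q _ => ?_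
  rw [Function.update_of_ne (p.succAbove_ne q)]
  congr 1
  have h1 : Function.update y p w
      = Function.update y ((p.succAbove q).succAbove (q.predAbove p)) w := by rw [sA_pA]
  rw [h1, comp_update_sA]
end CLemmas

/-- Let `(g, b)` be an `(n+1)`-Lie algebra over `K` and `f : g → K`
a linear functional vanishing on brackets.  Then
`{x₁,…,x_{n+2}} = ∑_{i=1}^{n+2} (−1)^{i−1} f(xᵢ) [x₁,…,x̂ᵢ,…,x_{n+2}]`
is an `(n+2)`-Lie algebra bracket on `g`. -/
theorem functional_extension_is_nLie
    {K : Type*} [Field K] {g : Type*} [AddCommGroup g] [Module K g]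
    {n : ℕ} (b : (Fin (n + 1) → g) → g) (hb : IsNLieBracket K b)
    (f : g →ₗ[K] K) (hf : ∀ x : Fin (n + 1) → g, f (b x) = 0) :
    IsNLieBracket K (fun y : Fin (n + 2) → g =>
      ∑ i : Fin (n + 2), ((-1 : K) ^ (i : ℕ) * f (y i)) • b (fun j => y (i.succAbove j))) := by
  obtain ⟨⟨hadd, hsmul, halt⟩, hfil⟩ := hb
  show IsNLieBracket K (Cmap b f)
  refine ⟨⟨?_, ?_, ?_⟩, ?_⟩
  · -- additivity
    intro y i u v
    simp only [Cmap_apply]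
    rw [← Finset.sum_add_distrib]
    refine Finset.sum_congr rfl fun k _ => ?_
    by_cases hk : k = i
    · subst hk
      simp only [Function.update_self, comp_update_self_sA]
      rw [map_add, mul_add, add_smul]
    · obtain ⟨j, hj⟩ := Fin.exists_succAbove_eq (show i ≠ k from fun hc => hk hc.symm)
      simp only [Function.update_of_ne hk]
      rw [← hj, comp_update_sA, comp_update_sA, comp_update_sA, hadd, smul_add]
  · -- smul
    intro y i c u
    simp only [Cmap_apply]
    rw [Finset.smul_sum]
    refine Finset.sum_congr rfl fun k _ => ?_
    by_cases hk : k = i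
    · subst hk
      simp only [Function.update_self, comp_update_self_sA]
      rw [map_smul, smul_eq_mul, smul_smul]
      congr 1
      ring
    · obtain ⟨j, hj⟩ := Fin.exists_succAbove_eq (show i ≠ k from fun hc => hk hc.symm)
      simp only [Function.update_of_ne hk]
      rw [← hj, comp_update_sA, comp_update_sA, hsmul, smul_comm]
  · -- alternating
    intro y i p hip hy
    simp only [Cmap_apply]
    rw [← Finset.add_sum_erase _ _ (Finset.mem_univ i),
      ← Finset.add_sum_erase _ _ (Finset.mem_erase.mpr ⟨hip.symm, Finset.mem_univ p⟩)]
    have hrest : ∀ k ∈ (Finset.univ.erase i).erase p,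
        ((-1 : K) ^ (k : ℕ) * f (y k)) • b (fun j => y (k.succAbove j)) = 0 := by
      intro k hk
      rw [Finset.mem_erase] at hk
      obtain ⟨hkp, hk2⟩ := hk
      rw [Finset.mem_erase] at hk2
      obtain ⟨hki, -⟩ := hk2
      obtain ⟨j1, hj1⟩ := Fin.exists_succAbove_eq (show i ≠ k from fun h => hki h.symm)
      obtain ⟨j2, hj2⟩ := Fin.exists_succAbove_eq (show p ≠ k from fun h => hkp h.symm)
      have hb0 : b (fun t => y (k.succAbove t)) = 0 := by
        refine halt _ j1 j2 (fun hc => hip ?_) ?_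
        · rw [← hj1, ← hj2, hc]
        · show y (k.succAbove j1) = y (k.succAbove j2)
          rw [hj1, hj2]; exact hy
      rw [hb0, smul_zero]
    rw [Finset.sum_eq_zero hrest, add_zero, hy, mul_comm ((-1 : K) ^ (i : ℕ)),
      mul_comm ((-1 : K) ^ (p : ℕ)), mul_smul, mul_smul, ← smul_add,
      b_cancel hadd halt y i p hip hy, smul_zero]
  · -- Filippov
    intro x y
    have hinv : Function.Involutive
        (fun z : Fin (n + 2) × Fin (n + 1) => (z.1.succAbove z.2, z.2.predAbove z.1)) := by
      intro z
      exact Prod.ext (sA_pA z.1 z.2) (pA_sA z.1 z.2)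
    have key : ∀ (F G : Fin (n + 2) → Fin (n + 1) → g),
        (∀ p q, F p q = G (p.succAbove q) (q.predAbove p)) →
        (∑ p, ∑ q, F p q) = ∑ p, ∑ q, G p q := by
      intro F G h
      rw [← Finset.sum_product', ← Finset.sum_product', Finset.univ_product_univ]
      exact Fintype.sum_bijective _ hinv.bijective _ _ (fun z => h z.1 z.2)
    have key0 : ∀ (F : Fin (n + 2) → Fin (n + 1) → g),
        (∀ p q, F p q + F (p.succAbove q) (q.predAbove p) = 0) →
        (∑ p, ∑ q, F p q) = 0 := by
      intro F h
      rw [← Finset.sum_product', Finset.univ_product_univ]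
      exact Finset.sum_ninvolution
        (fun z : Fin (n + 2) × Fin (n + 1) => (z.1.succAbove z.2, z.2.predAbove z.1))
        (fun z => h z.1 z.2)
        (fun z _ hc => (z.1.succAbove_ne z.2) (congrArg Prod.fst hc))
        (fun z => Finset.mem_univ _) hinv
    -- LHS expansion
    have hL : Cmap b f (Fin.snoc x (Cmap b f y))
        = ∑ k : Fin (n + 1), ∑ i : Fin (n + 2), ∑ j : Fin (n + 1),
            ((-1 : K) ^ (k : ℕ) * f (x k)) • (((-1 : K) ^ (i : ℕ) * f (y i)) •
              b (Function.update (fun t => y (i.succAbove t)) j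
                  (b (Fin.snoc (fun t => x (k.succAbove t)) (y (i.succAbove j)))))) := by
      rw [C_snoc, C_f0 b f hf, mul_zero, zero_smul, add_zero]
      refine Finset.sum_congr rfl fun k _ => ?_
      rw [Cmap_apply b f y, b_snoc_sum hadd hsmul, Finset.smul_sum]
      refine Finset.sum_congr rfl fun i _ => ?_
      rw [hfil (fun t => x (k.succAbove t)) (fun t => y (i.succAbove t)),
        Finset.smul_sum, Finset.smul_sum]
    -- RHS expansion
    have hR1 : ∀ p : Fin (n + 2),
        Cmap b f (Function.update y p (Cmap b f (Fin.snoc x (y p))))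
          = (∑ q : Fin (n + 1),
              ((-1 : K) ^ ((p.succAbove q : Fin (n + 2)) : ℕ) * f (y (p.succAbove q))) •
                (∑ k : Fin (n + 1), ((-1 : K) ^ (k : ℕ) * f (x k)) •
                  b (Function.update (fun s => y ((p.succAbove q).succAbove s)) (q.predAbove p)
                      (b (Fin.snoc (fun t => x (k.succAbove t)) (y p)))))) +
            ∑ q : Fin (n + 1),
              ((-1 : K) ^ ((p.succAbove q : Fin (n + 2)) : ℕ) * f (y (p.succAbove q))) •
                (((-1 : K) ^ (n + 1) * f (y p)) •
                  b (Function.update (fun s => y ((p.succAbove q).succAbove s)) (q.predAbove p)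
                      (b x))) := by
      intro p
      rw [C_update b f y p _ (C_f0 b f hf _), ← Finset.sum_add_distrib]
      refine Finset.sum_congr rfl fun q _ => ?_
      rw [C_snoc, hadd, b_update_sum hadd hsmul, hsmul, smul_add]
    rw [hL, Finset.sum_congr rfl fun p _ => hR1 p, Finset.sum_add_distrib]
    -- second part vanishes
    have hT2 : (∑ p : Fin (n + 2), ∑ q : Fin (n + 1),
        ((-1 : K) ^ ((p.succAbove q : Fin (n + 2)) : ℕ) * f (y (p.succAbove q))) •
          (((-1 : K) ^ (n + 1) * f (y p)) •
            b (Function.update (fun s => y ((p.succAbove q).succAbove s)) (q.predAbove p)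
                (b x)))) = 0 := by
      refine key0 _ fun p q => ?_
      rw [sA_pA, pA_sA]
      set Z2 : Fin (n + 2) → g :=
        Function.update (Function.update y p (b x)) (p.succAbove q) (b x) with hZ2
      have e1 : Function.update (fun s => y ((p.succAbove q).succAbove s)) (q.predAbove p) (b x)
          = fun s => Z2 ((p.succAbove q).succAbove s) := by
        have e1a := comp_update_sA y (p.succAbove q) (q.predAbove p) (b x)
        rw [sA_pA] at e1a
        rw [← e1a]
        funext t
        exact (Function.update_of_ne (Fin.succAbove_ne _ t) _ _).symm
      have e2 : Function.update (fun s => y (p.succAbove s)) q (b x)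
          = fun s => Z2 (p.succAbove s) := by
        rw [← comp_update_sA y p q (b x)]
        funext t
        by_cases h : p.succAbove t = p.succAbove q
        · rw [h, Function.update_self, hZ2, Function.update_self]
        · rw [Function.update_of_ne h, hZ2, Function.update_of_ne h,
            Function.update_of_ne (Fin.succAbove_ne p t)]
      rw [e1, e2]
      have hsc1 : ((-1 : K) ^ ((p.succAbove q : Fin (n + 2)) : ℕ) * f (y (p.succAbove q)))
            * ((-1 : K) ^ (n + 1) * f (y p))
          = ((-1 : K) ^ (n + 1) * f (y (p.succAbove q)) * f (y p))
            * (-1 : K) ^ ((p.succAbove q : Fin (n + 2)) : ℕ) := by ring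
      have hsc2 : ((-1 : K) ^ (p : ℕ) * f (y p))
            * ((-1 : K) ^ (n + 1) * f (y (p.succAbove q)))
          = ((-1 : K) ^ (n + 1) * f (y (p.succAbove q)) * f (y p))
            * (-1 : K) ^ (p : ℕ) := by ring
      have hZne : Z2 (p.succAbove q) = Z2 p := by
        rw [hZ2, Function.update_self,
          Function.update_of_ne (Fin.succAbove_ne p q).symm, Function.update_self]
      have sclem1 : ∀ (c1 c2 c3 c4 : K) (V : g),
          (c1 * c2) • ((c3 * c4) • V) = (c3 * c2 * c4) • (c1 • V) := by
        intros; rw [smul_smul, smul_smul]; congr 1; ring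
      have sclem2 : ∀ (c1 c2 c3 c4 : K) (V : g),
          (c1 * c2) • ((c3 * c4) • V) = (c3 * c4 * c2) • (c1 • V) := by
        intros; rw [smul_smul, smul_smul]; congr 1; ring
      rw [sclem1, sclem2, ← smul_add,
        b_cancel hadd halt Z2 (p.succAbove q) p (Fin.succAbove_ne p q) hZne, smul_zero]
    rw [hT2, add_zero]
    -- first part matches
    have hdist : (∑ p : Fin (n + 2), ∑ q : Fin (n + 1),
        ((-1 : K) ^ ((p.succAbove q : Fin (n + 2)) : ℕ) * f (y (p.succAbove q))) •
          (∑ k : Fin (n + 1), ((-1 : K) ^ (k : ℕ) * f (x k)) •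
            b (Function.update (fun s => y ((p.succAbove q).succAbove s)) (q.predAbove p)
                (b (Fin.snoc (fun t => x (k.succAbove t)) (y p))))))
        = ∑ p : Fin (n + 2), ∑ q : Fin (n + 1), ∑ k : Fin (n + 1),
            ((-1 : K) ^ ((p.succAbove q : Fin (n + 2)) : ℕ) * f (y (p.succAbove q))) •
              (((-1 : K) ^ (k : ℕ) * f (x k)) •
                b (Function.update (fun s => y ((p.succAbove q).succAbove s)) (q.predAbove p)
                    (b (Fin.snoc (fun t => x (k.succAbove t)) (y p))))) :=
      Finset.sum_congr rfl fun p _ => Finset.sum_congr rfl fun q _ => Finset.smul_sum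
    rw [hdist]
    have reorder : ∀ (H : Fin (n + 2) → Fin (n + 1) → Fin (n + 1) → g),
        (∑ p : Fin (n + 2), ∑ q : Fin (n + 1), ∑ k : Fin (n + 1), H p q k)
          = ∑ k : Fin (n + 1), ∑ p : Fin (n + 2), ∑ q : Fin (n + 1), H p q k := by
      intro H
      calc (∑ p : Fin (n + 2), ∑ q : Fin (n + 1), ∑ k : Fin (n + 1), H p q k)
          = ∑ p : Fin (n + 2), ∑ k : Fin (n + 1), ∑ q : Fin (n + 1), H p q k :=
            Finset.sum_congr rfl fun p _ => Finset.sum_comm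
        _ = ∑ k : Fin (n + 1), ∑ p : Fin (n + 2), ∑ q : Fin (n + 1), H p q k :=
            Finset.sum_comm
    rw [reorder]
    refine Finset.sum_congr rfl fun k _ => ?_
    refine (key _ (fun i j =>
      ((-1 : K) ^ (k : ℕ) * f (x k)) • (((-1 : K) ^ (i : ℕ) * f (y i)) •
        b (Function.update (fun t => y (i.succAbove t)) j
            (b (Fin.snoc (fun t => x (k.succAbove t)) (y (i.succAbove j))))))) fun p q => ?_).symm
    beta_reduce
    rw [sA_pA]
    exact smul_comm _ _ _
end

section
/- Let (g, [·,…,·]) be an n-Lie algebra over a field K, let f : g → K be a linear functional with f([x₁,…,xₙ]) = 0 for all xᵢ ∈ g, and let g_f denote the (n+1)-Lie algebra on g with bracket {x₁,…,x_{n+1}} = Σ_{i=1}^{n+1} (−1)^{i−1} f(xᵢ) [x₁,…,x̂ᵢ,…,x_{n+1}]. If N : g → g is a Nijenhuis operator on the n-Lie algebra (g, [·,…,·]), then N is also a Nijenhuis operator on the (n+1)-Lie algebra (g_f, {·,…,·}), i.e. {Nx₁,…,Nx_{n+1}} = N({x₁,…,x_{n+1}}_N^{n}) for all xᵢ ∈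 g. -/
open Finset

namespace NijAux
variable {K : Type*} [Field K] {g : Type*} [AddCommGroup g] [Module K g]

def NSel {m : ℕ} (N : Module.End K g) (S : Finset (Fin m)) (x : Fin m → g) : Fin m → g :=
  fun i => if i ∈ S then N (x i) else x i

lemma nested_zero {m : ℕ} (b : (Fin m → g) → g) (N : Module.End K g) (x : Fin m → g) :
    nestedBracket b N 0 x = b x := rfl

lemma nested_succ {m : ℕ} (b : (Fin m → g) → g) (N : Module.End K g) (j : ℕ) (x : Fin m → g) :
    nestedBracket b N (j+1) x =
      (∑ S ∈ powersetCard (j+1) (univ : Finset (Fin m)), b (NSel N S x))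
        - N (nestedBracket b N j x) := rfl

lemma A_zero {m : ℕ} (b : (Fin m → g) → g) (N : Module.End K g) (x : Fin m → g) :
    ∑ S ∈ powersetCard 0 (univ : Finset (Fin m)), b (NSel N S x) = b x := by
  rw [Finset.powersetCard_zero, Finset.sum_singleton]
  have h : NSel N (∅ : Finset (Fin m)) x = x := by funext i; simp [NSel]
  rw [h]

lemma A_top {m : ℕ} (b : (Fin (m+1) → g) → g) (N : Module.End K g) (x : Fin (m+1) → g) :
    ∑ S ∈ powersetCard (m+1) (univ : Finset (Fin (m+1))), b (NSel N S x)
      = b (fun i => N (x i)) := by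
  have h2 : powersetCard (m+1) (univ : Finset (Fin (m+1))) = {univ} := by
    simpa using Finset.powersetCard_self (univ : Finset (Fin (m+1)))
  rw [h2, Finset.sum_singleton]
  have h : NSel N (univ : Finset (Fin (m+1))) x = fun i => N (x i) := by
    funext i; simp [NSel]
  rw [h]

lemma map_filter {n : ℕ} (p : Fin (n+2)) (S : Finset (Fin (n+2))) :
    ((univ : Finset (Fin (n+1))).filter (fun k => p.succAbove k ∈ S)).map p.succAboveEmb
      = S.erase p := by
  ext x
  simp only [mem_map, mem_filter, mem_univ, true_and, Fin.succAboveEmb,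
    Function.Embedding.coeFn_mk, mem_erase]
  constructor
  · rintro ⟨k, hk, rfl⟩; exact ⟨Fin.succAbove_ne p k, hk⟩
  · rintro ⟨hx, hS⟩; obtain ⟨k, rfl⟩ := Fin.exists_succAbove_eq hx; exact ⟨k, hS, rfl⟩

lemma notMem_map {n : ℕ} (p : Fin (n+2)) (T : Finset (Fin (n+1))) :
    p ∉ T.map p.succAboveEmb := by
  simp only [Finset.mem_map, Fin.succAboveEmb, Function.Embedding.coeFn_mk]
  rintro ⟨a, _, h⟩
  exact Fin.succAbove_ne p a h

lemma mem_map_iff {n : ℕ} (p : Fin (n+2)) (T : Finset (Fin (n+1))) (k : Fin (n+1)) :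
    p.succAbove k ∈ T.map p.succAboveEmb ↔ k ∈ T :=
  Finset.mem_map' _

lemma mem_insert_map_iff {n : ℕ} (p : Fin (n+2)) (T : Finset (Fin (n+1))) (k : Fin (n+1)) :
    p.succAbove k ∈ insert p (T.map p.succAboveEmb) ↔ k ∈ T := by
  rw [Finset.mem_insert, mem_map_iff]
  simp [Fin.succAbove_ne p k]

lemma filter_insert_map {n : ℕ} (p : Fin (n+2)) (T : Finset (Fin (n+1))) :
    (univ : Finset (Fin (n+1))).filter
        (fun k => p.succAbove k ∈ insert p (T.map p.succAboveEmb)) = T := by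
  ext k
  rw [mem_filter, mem_insert_map_iff]
  simp

lemma filter_map {n : ℕ} (p : Fin (n+2)) (T : Finset (Fin (n+1))) :
    (univ : Finset (Fin (n+1))).filter (fun k => p.succAbove k ∈ T.map p.succAboveEmb) = T := by
  ext k
  rw [mem_filter, mem_map_iff]
  simp

lemma sum_filter_mem {n : ℕ} (p : Fin (n+2)) (j : ℕ) (F : Finset (Fin (n+2)) → g) :
    ∑ S ∈ (powersetCard (j+1) (univ : Finset (Fin (n+2)))).filter (fun S => p ∈ S), F S
      = ∑ T ∈ powersetCard j (univ : Finset (Fin (n+1))), F (insert p (T.map p.succAboveEmb)) := by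
  refine Finset.sum_nbij'
    (fun S => (univ : Finset (Fin (n+1))).filter (fun k => p.succAbove k ∈ S))
    (fun T => insert p (T.map p.succAboveEmb)) ?_ ?_ ?_ ?_ ?_
  · intro S hS
    simp only [mem_filter, mem_powersetCard_univ] at hS
    rw [mem_powersetCard_univ]
    have hc := congrArg Finset.card (map_filter p S)
    rw [Finset.card_map, Finset.card_erase_of_mem hS.2, hS.1] at hc
    simpa using hc
  · intro T hT
    rw [mem_powersetCard_univ] at hT
    simp only [mem_filter, mem_powersetCard_univ]
    refine ⟨?_, Finset.mem_insert_self _ _⟩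
    rw [Finset.card_insert_of_notMem (notMem_map p T), Finset.card_map, hT]
  · intro S hS
    simp only [mem_filter] at hS
    beta_reduce
    rw [map_filter, Finset.insert_erase hS.2]
  · intro T _; exact filter_insert_map p T
  · intro S hS
    simp only [mem_filter] at hS
    beta_reduce
    rw [map_filter, Finset.insert_erase hS.2]

lemma sum_filter_notMem {n : ℕ} (p : Fin (n+2)) (j : ℕ) (F : Finset (Fin (n+2)) → g) :
    ∑ S ∈ (powersetCard j (univ : Finset (Fin (n+2)))).filter (fun S => p ∉ S), F S
      = ∑ T ∈ powersetCard j (univ : Finset (Fin (n+1))), F (T.map p.succAboveEmb) := by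
  refine Finset.sum_nbij'
    (fun S => (univ : Finset (Fin (n+1))).filter (fun k => p.succAbove k ∈ S))
    (fun T => T.map p.succAboveEmb) ?_ ?_ ?_ ?_ ?_
  · intro S hS
    simp only [mem_filter, mem_powersetCard_univ] at hS
    rw [mem_powersetCard_univ]
    have hc := congrArg Finset.card (map_filter p S)
    rw [Finset.card_map, Finset.erase_eq_of_notMem hS.2, hS.1] at hc
    simpa using hc
  · intro T hT
    rw [mem_powersetCard_univ] at hT
    simp only [mem_filter, mem_powersetCard_univ]
    exact ⟨by rw [Finset.card_map, hT], notMem_map p T⟩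
  · intro S hS
    simp only [mem_filter] at hS
    beta_reduce
    rw [map_filter, Finset.erase_eq_of_notMem hS.2]
  · intro T _; exact filter_map p T
  · intro S hS
    simp only [mem_filter] at hS
    beta_reduce
    rw [map_filter, Finset.erase_eq_of_notMem hS.2]

/-- The extended bracket on `g_f`. -/
def extBracket {n : ℕ} (b : (Fin (n+1) → g) → g) (f : g →ₗ[K] K) : (Fin (n+2) → g) → g :=
  fun y => ∑ i : Fin (n+2), ((-1 : K) ^ (i : ℕ) * f (y i)) • b (fun j => y (i.succAbove j))

lemma Af_eq {n : ℕ} (b : (Fin (n+1) → g) → g) (f : g →ₗ[K] K) (N : Module.End K g)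
    (j : ℕ) (y : Fin (n+2) → g) :
    ∑ S ∈ powersetCard (j+1) (univ : Finset (Fin (n+2))), extBracket b f (NSel N S y)
      = (∑ p : Fin (n+2), ((-1 : K) ^ (p : ℕ) * f (N (y p))) •
            ∑ T ∈ powersetCard j (univ : Finset (Fin (n+1))),
              b (NSel N T (fun k => y (p.succAbove k))))
        + ∑ p : Fin (n+2), ((-1 : K) ^ (p : ℕ) * f (y p)) •
            ∑ T ∈ powersetCard (j+1) (univ : Finset (Fin (n+1))),
              b (NSel N T (fun k => y (p.succAbove k))) := by
  unfold extBracket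
  rw [Finset.sum_comm, ← Finset.sum_add_distrib]
  refine Finset.sum_congr rfl fun p _ => ?_
  rw [← Finset.sum_filter_add_sum_filter_not
    (powersetCard (j+1) (univ : Finset (Fin (n+2)))) (fun S => p ∈ S)]
  congr 1
  · rw [sum_filter_mem p j, Finset.smul_sum]
    refine Finset.sum_congr rfl fun T hT => ?_
    have h1 : NSel N (insert p (T.map p.succAboveEmb)) y p = N (y p) := by
      simp [NSel]
    have h2 : (fun k => NSel N (insert p (T.map p.succAboveEmb)) y (p.succAbove k))
        = NSel N T (fun k => y (p.succAbove k)) := by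
      funext k
      simp only [NSel, mem_insert_map_iff]
    rw [h1, h2]
  · rw [sum_filter_notMem p (j+1), Finset.smul_sum]
    refine Finset.sum_congr rfl fun T hT => ?_
    have h1 : NSel N (T.map p.succAboveEmb) y p = y p := by
      simp [NSel, notMem_map p T]
    have h2 : (fun k => NSel N (T.map p.succAboveEmb) y (p.succAbove k))
        = NSel N T (fun k => y (p.succAbove k)) := by
      funext k
      simp only [NSel, mem_map_iff]
    rw [h1, h2]

lemma key {n : ℕ} (b : (Fin (n+1) → g) → g) (f : g →ₗ[K] K) (N : Module.End K g)
    (j : ℕ) (y : Fin (n+2) → g) :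
    nestedBracket (extBracket b f) N (j+1) y
      = (∑ p : Fin (n+2), ((-1 : K) ^ (p : ℕ) * f (N (y p))) •
            nestedBracket b N j (fun k => y (p.succAbove k)))
        + ∑ p : Fin (n+2), ((-1 : K) ^ (p : ℕ) * f (y p)) •
            nestedBracket b N (j+1) (fun k => y (p.succAbove k)) := by
  induction j generalizing y with
  | zero =>
    rw [nested_succ, Af_eq]
    have hN0 : N (nestedBracket (extBracket b f) N 0 y)
        = ∑ p : Fin (n+2), ((-1 : K) ^ (p : ℕ) * f (y p)) •
            N (b (fun k => y (p.succAbove k))) := by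
      rw [nested_zero]
      unfold extBracket
      rw [map_sum]
      simp_rw [map_smul]
    rw [hN0]
    simp_rw [A_zero, nested_succ, nested_zero, smul_sub, Finset.sum_sub_distrib]
    abel
  | succ j ih =>
    rw [nested_succ, Af_eq, ih]
    rw [map_add, map_sum, map_sum]
    simp_rw [map_smul]
    simp_rw [nested_succ b N j, nested_succ b N (j+1), smul_sub, Finset.sum_sub_distrib]
    abel

end NijAux

/-- Let `(g, b)` be an `(n+1)`-Lie algebra, `f : g → K` a linear
functional vanishing on brackets, and `g_f` the `(n+2)`-Lie algebra with bracket
`{x₁,…,x_{n+2}} = ∑ᵢ (−1)^{i−1} f(xᵢ) [x₁,…,x̂ᵢ,…,x_{n+2}]`.  If `N` is a Nijenhuis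
operator on `(g, b)`, then `N` is also a Nijenhuis operator on `g_f`. -/
theorem nijenhuis_on_functional_extension
    {K : Type*} [Field K] {g : Type*} [AddCommGroup g] [Module K g]
    {n : ℕ} (b : (Fin (n + 1) → g) → g) (hb : IsNLieBracket K b)
    (f : g →ₗ[K] K) (hf : ∀ x : Fin (n + 1) → g, f (b x) = 0)
    (N : Module.End K g) (hN : IsNijenhuis b N) :
    IsNijenhuis (fun y : Fin (n + 2) → g =>
      ∑ i : Fin (n + 2), ((-1 : K) ^ (i : ℕ) * f (y i)) • b (fun j => y (i.succAbove j))) N := by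
  intro x
  show NijAux.extBracket b f (fun i => N (x i))
      = N (nestedBracket (NijAux.extBracket b f) N (n+1) x)
  rw [NijAux.key b f N n x]
  rw [map_add, map_sum, map_sum]
  simp_rw [map_smul]
  have h1 : ∀ p : Fin (n+2), N (nestedBracket b N n (fun k => x (p.succAbove k)))
      = b (fun k => N (x (p.succAbove k))) := fun p => (hN _).symm
  have h2 : ∀ p : Fin (n+2), N (nestedBracket b N (n+1) (fun k => x (p.succAbove k))) = 0 := by
    intro p
    rw [NijAux.nested_succ, NijAux.A_top, map_sub, ← hN]
    exact sub_self _
  simp_rw [h1, h2, smul_zero, Finset.sum_const_zero, add_zero]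
  rfl
end

section
/- Let (g, ·) be a commutative associative algebra over a field K, let D : g → g be a derivation (D(x·y) = D(x)·y + x·D(y)), and let f : g → K be a linear functional satisfying f(D(x)·y) = f(x·D(y)) for all x, y ∈ g. Then the trilinear bracket ⟦x,y,z⟧ = f(x)(D(y)·z − D(z)·y) + f(y)(D(z)·x − D(x)·z) + f(z)(D(x)·y − D(y)·x) is skew-symmetric and satisfies the Filippov identity, i.e. (g, ⟦·,·,·⟧) is a 3-Lie algebra. -/
/-- `br` is a 3-Lie algebra bracket over `K`: trilinear, alternating (skew-symmetric)
and satisfying the Filippov identity. -/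
def Is3LieBracket (K : Type*) [Field K] {A : Type*} [AddCommGroup A] [Module K A]
    (br : A → A → A → A) : Prop :=
  (∀ x₁ x₂ y z, br (x₁ + x₂) y z = br x₁ y z + br x₂ y z) ∧
  (∀ (c : K) (x y z : A), br (c • x) y z = c • br x y z) ∧
  (∀ x y₁ y₂ z, br x (y₁ + y₂) z = br x y₁ z + br x y₂ z) ∧
  (∀ (c : K) (x y z : A), br x (c • y) z = c • br x y z) ∧
  (∀ x y z₁ z₂, br x y (z₁ + z₂) = br x y z₁ + br x y z₂) ∧
  (∀ (c : K) (x y z : A), br x y (c • z) = c • br x y z) ∧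
  (∀ x y, br x x y = 0) ∧ (∀ x y, br x y y = 0) ∧ (∀ x y, br x y x = 0) ∧
  (∀ x y a b c, br x y (br a b c) = br (br x y a) b c + br a (br x y b) c + br a b (br x y c))

/-- Let `(A, *)` be a commutative associative algebra over a field
`K`, `D` a derivation and `f : A → K` a linear functional with `f(D(x)·y) = f(x·D(y))`.
Then `⟦x,y,z⟧ = f(x)(D(y)z − D(z)y) + f(y)(D(z)x − D(x)z) + f(z)(D(x)y − D(y)x)`
is a 3-Lie algebra bracket on `A`. -/
theorem derivation_functional_threeLie
    {K : Type*} [Field K] {A : Type*} [NonUnitalCommRing A] [Module K A]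
    [SMulCommClass K A A] [IsScalarTower K A A]
    (D : A →ₗ[K] A) (hD : ∀ x y : A, D (x * y) = D x * y + x * D y)
    (f : A →ₗ[K] K) (hf : ∀ x y : A, f (D x * y) = f (x * D y)) :
    Is3LieBracket K (fun x y z =>
      f x • (D y * z - D z * y) + f y • (D z * x - D x * z) + f z • (D x * y - D y * x)) := by
  constructor
  · intro x₁ x₂ y z
    simp only [map_add, add_smul, mul_add, add_mul, smul_add, mul_sub, sub_mul, smul_sub]
    abel
  refine ⟨?_, ?_, ?_, ?_, ?_, ?_, ?_, ?_, ?_⟩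
  · intro c x y z
    simp only [map_smul, smul_eq_mul, mul_smul, smul_sub, smul_add, mul_smul_comm, smul_mul_assoc]
    module
  · intro x y₁ y₂ z
    simp only [map_add, add_smul, mul_add, add_mul, smul_add, mul_sub, sub_mul, smul_sub]
    abel
  · intro c x y z
    simp only [map_smul, smul_eq_mul, mul_smul, smul_sub, smul_add, mul_smul_comm, smul_mul_assoc]
    module
  · intro x y z₁ z₂
    simp only [map_add, add_smul, mul_add, add_mul, smul_add, mul_sub, sub_mul, smul_sub]
    abel
  · intro c x y z
    simp only [map_smul, smul_eq_mul, mul_smul, smul_sub, smul_add, mul_smul_comm, smul_mul_assoc]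
    module
  · intro x y
    simp only [sub_self, smul_zero, zero_add]
    rw [mul_comm (D x) y]
    module
  · intro x y
    simp only [sub_self, smul_zero, add_zero]
    rw [mul_comm (D x) y]
    module
  · intro x y
    simp only [sub_self, smul_zero]
    rw [mul_comm (D x) y]
    module
  · intro x y a b c
    have key : ∀ u v : A, f (D u * v) = f (D v * u) := fun u v => by rw [hf, mul_comm]
    have fB : ∀ u v w : A,
        f (f u • (D v * w - D w * v) + f v • (D w * u - D u * w)
            + f w • (D u * v - D v * u)) = 0 := by
      intro u v w
      simp only [map_add, map_sub, map_smul, smul_eq_mul]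
      rw [key v w, key w u, key u v]; ring
    simp only [fB, zero_smul, zero_add, add_zero]
    simp only [map_add, map_sub, map_smul, hD,
      smul_sub, smul_add, mul_sub, sub_mul, mul_add, add_mul, mul_smul_comm,
      smul_mul_assoc, smul_smul]
    simp only [mul_comm, mul_left_comm, mul_assoc, mul_smul_comm, smul_mul_assoc]
    module
end

section
/- Let (g, ·) be a commutative associative algebra over a field K and D : g → g a derivation. Then: (1) the bracket [x,y]_D = D(x)·y − D(y)·x makes g into a Lie algebra; and (2) if N : g → g is a Nijenhuis operator on the associative algebra (g, ·) satisfying D∘N = N∘D, then N is a Nijenhuis operator on the Lie algebra (g, [·,·]_D), i.e. [Nx, Ny]_D = N([Nx, y]_D + [x, Ny]_D − N[x, y]_D) for all x, y ∈ g. -/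
/-- `br` is a Lie algebra bracket over `K`: bilinear, alternating, Jacobi/Leibniz. -/
def IsLieBracket (K : Type*) [Field K] {A : Type*} [AddCommGroup A] [Module K A]
    (br : A → A → A) : Prop :=
  (∀ x₁ x₂ y, br (x₁ + x₂) y = br x₁ y + br x₂ y) ∧
  (∀ (c : K) (x y : A), br (c • x) y = c • br x y) ∧
  (∀ x y₁ y₂, br x (y₁ + y₂) = br x y₁ + br x y₂) ∧
  (∀ (c : K) (x y : A), br x (c • y) = c • br x y) ∧
  (∀ x, br x x = 0) ∧
  (∀ x y z, br x (br y z) = br (br x y) z + br y (br x z))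

/-- Let `(A, *)` be a commutative associative algebra over `K` and
`D` a derivation.  Then `[x,y]_D = D(x)·y − D(y)·x` is a Lie bracket on `A`, and any
Nijenhuis operator `N` on the associative algebra `(A, *)` commuting with `D` is a
Nijenhuis operator on the Lie algebra `(A, [·,·]_D)`. -/
theorem derivation_lie_bracket_and_nijenhuis
    {K : Type*} [Field K] {A : Type*} [NonUnitalCommRing A] [Module K A]
    [SMulCommClass K A A] [IsScalarTower K A A]
    (D : A →ₗ[K] A) (hD : ∀ x y : A, D (x * y) = D x * y + x * D y) :
    IsLieBracket K (fun x y => D x * y - D y * x) ∧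
    (∀ N : A →ₗ[K] A,
      (∀ x y : A, N x * N y = N (N x * y + x * N y - N (x * y))) →
      (∀ x : A, D (N x) = N (D x)) →
      ∀ x y : A,
        D (N x) * N y - D (N y) * N x
          = N ((D (N x) * y - D y * N x) + (D x * N y - D (N y) * x)
              - N (D x * y - D y * x))) := by
  constructor
  · refine ⟨?_, ?_, ?_, ?_, ?_, ?_⟩
    · intro x₁ x₂ y; simp only [map_add, add_mul, mul_add]; abel
    · intro c x y
      simp only [map_smul, smul_mul_assoc, mul_smul_comm, smul_sub]
    · intro x y₁ y₂; simp only [map_add, add_mul, mul_add]; abel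
    · intro c x y
      simp only [map_smul, smul_mul_assoc, mul_smul_comm, smul_sub]
    · intro x; exact sub_self _
    · intro x y z
      simp only [map_sub, hD, map_add, add_mul, mul_add, sub_mul, mul_sub]
      simp only [mul_comm, mul_assoc, mul_left_comm]
      abel
  · intro N hN hcomm x y
    simp only [hcomm]
    rw [hN (D x) y, hN (D y) x, ← map_sub]
    congr 1
    rw [map_sub]
    abel
end

section
/- Let (g, ·) be a commutative associative algebra over a field K, D : g → g a derivation, and f : g → K a linear functional with f(D(x)·y) = f(x·D(y)) for all x, y ∈ g, so that ⟦x,y,z⟧ = f(x)(D(y)·z − D(z)·y) + f(y)(D(z)·x − D(x)·z) + f(z)(D(x)·y − D(y)·x) defines a 3-Lie algebra structure on g. If N : g → g is a Nijenhuis operator on the associative algebra (g, ·) satisfying D∘N = N∘D, then N is a Nijenhuis operator on the 3-Lie algebra (g, ⟦·,·,·⟧), i.e. ⟦Nx, Ny, Nz⟧ = N(⟦x,y,z⟧_N²) for all x, y, z ∈ g. -/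
/-- With `(A, *)` commutative associative over `K`, `D` a derivation
and `f` a linear functional with `f(D(x)·y) = f(x·D(y))`, the bracket
`⟦x,y,z⟧ = f(x)(D(y)z − D(z)y) + f(y)(D(z)x − D(x)z) + f(z)(D(x)y − D(y)x)` is a
3-Lie bracket; if `N` is a Nijenhuis operator on the associative algebra `(A, *)`
commuting with `D`, then `N` is a Nijenhuis operator on this 3-Lie algebra. -/
theorem nijenhuis_on_derivation_functional_threeLie
    {K : Type*} [Field K] {A : Type*} [NonUnitalCommRing A] [Module K A]
    [SMulCommClass K A A] [IsScalarTower K A A]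
    (D : A →ₗ[K] A) (hD : ∀ x y : A, D (x * y) = D x * y + x * D y)
    (f : A →ₗ[K] K) (hf : ∀ x y : A, f (D x * y) = f (x * D y))
    (N : A →ₗ[K] A)
    (hN : ∀ x y : A, N x * N y = N (N x * y + x * N y - N (x * y)))
    (hDN : ∀ x : A, D (N x) = N (D x)) :
    IsNijenhuis3 K (fun x y z =>
      f x • (D y * z - D z * y) + f y • (D z * x - D x * z) + f z • (D x * y - D y * x)) N := by
  have key : ∀ u v : A, D (N u) * N v - D (N v) * N u =
      N (D (N u) * v - D v * N u + (D u * N v - D (N v) * u) - N (D u * v - D v * u)) := by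
    intro u v
    rw [hDN u, hDN v, hN (D u) v, hN (D v) u]
    simp only [map_add, map_sub]
    abel
  intro x y z
  dsimp only
  rw [key y z, key z x, key x y]
  simp only [map_add, map_sub, map_smul]
  module
end

section
/- Let g = ℂ⁴ with basis e₁, e₂, e₃, e₄ and the trilinear skew-symmetric bracket determined by [e₂,e₃,e₄] = e₁, [e₁,e₂,e₄] = e₃, [e₁,e₃,e₄] = e₂, [e₁,e₂,e₃] = e₄ (this is the 4-dimensional simple complex 3-Lie algebra). Then every derivation N of g (i.e. every linear map N with N[x,y,z] = [Nx,y,z] + [x,Ny,z] + [x,y,Nz]) is a Rota-Baxter operator of weight 0 on g, and consequently every derivation of g is a Nijenhuis operator on g. -/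
/-- The 3×3 minor of the coordinates `i, j, k` of the three vectors `x, y, z ∈ ℂ⁴`. -/
def minor3 (i j k : Fin 4) (x y z : Fin 4 → ℂ) : ℂ :=
  x i * (y j * z k) - x i * (y k * z j) - x j * (y i * z k) + x j * (y k * z i)
    + x k * (y i * z j) - x k * (y j * z i)

/-- The 4-dimensional simple complex 3-Lie algebra: the trilinear skew-symmetric
bracket on `ℂ⁴` determined by `[e₂,e₃,e₄] = e₁`, `[e₁,e₂,e₄] = e₃`,
`[e₁,e₃,e₄] = e₂`, `[e₁,e₂,e₃] = e₄` (indices written 1-based; here 0-based). -/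
noncomputable def fourDimBracket (x y z : Fin 4 → ℂ) : Fin 4 → ℂ :=
  minor3 1 2 3 x y z • (Pi.single 0 1 : Fin 4 → ℂ)
    + minor3 0 1 3 x y z • (Pi.single 2 1 : Fin 4 → ℂ)
    + minor3 0 2 3 x y z • (Pi.single 1 1 : Fin 4 → ℂ)
    + minor3 0 1 2 x y z • (Pi.single 3 1 : Fin 4 → ℂ)

/-- `P` is a Rota-Baxter operator of weight 0 on the 3-Lie algebra `(A, br)`. -/
def IsRotaBaxter3 (K : Type*) [Field K] {A : Type*} [AddCommGroup A] [Module K A]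
    (br : A → A → A → A) (P : A →ₗ[K] A) : Prop :=
  ∀ x y z : A,
    br (P x) (P y) (P z)
      = P (br (P x) (P y) z + br (P x) y (P z) + br x (P y) (P z))

set_option maxHeartbeats 2000000 in
/-- Every derivation of the 4-dimensional simple complex 3-Lie
algebra is a Rota-Baxter operator of weight 0, and consequently every derivation
is a Nijenhuis operator. -/
theorem derivations_of_fourDim_are_rotaBaxter_and_nijenhuis
    (N : (Fin 4 → ℂ) →ₗ[ℂ] (Fin 4 → ℂ))
    (hder : ∀ x y z : Fin 4 → ℂ,
      N (fourDimBracket x y z)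
        = fourDimBracket (N x) y z + fourDimBracket x (N y) z + fourDimBracket x y (N z)) :
    IsRotaBaxter3 ℂ fourDimBracket N ∧ IsNijenhuis3 ℂ fourDimBracket N := by
  classical
  -- values of the bracket on the basis
  have hE1 : fourDimBracket (Pi.single 1 1) (Pi.single 2 1) (Pi.single 3 1) = Pi.single 0 1 := by
    funext i; simp [fourDimBracket, minor3, Pi.single_apply]
  have hE2 : fourDimBracket (Pi.single 0 1) (Pi.single 1 1) (Pi.single 3 1) = Pi.single 2 1 := by
    funext i; simp [fourDimBracket, minor3, Pi.single_apply]
  have hE3 : fourDimBracket (Pi.single 0 1) (Pi.single 2 1) (Pi.single 3 1) = Pi.single 1 1 := by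
    funext i; simp [fourDimBracket, minor3, Pi.single_apply]
  have hE4 : fourDimBracket (Pi.single 0 1) (Pi.single 1 1) (Pi.single 2 1) = Pi.single 3 1 := by
    funext i; simp [fourDimBracket, minor3, Pi.single_apply]
  have h1 := hder (Pi.single 1 1) (Pi.single 2 1) (Pi.single 3 1); rw [hE1] at h1
  have h2 := hder (Pi.single 0 1) (Pi.single 1 1) (Pi.single 3 1); rw [hE2] at h2
  have h3 := hder (Pi.single 0 1) (Pi.single 2 1) (Pi.single 3 1); rw [hE3] at h3
  have h4 := hder (Pi.single 0 1) (Pi.single 1 1) (Pi.single 2 1); rw [hE4] at h4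
  have h1_0 := congrFun h1 0; have h1_1 := congrFun h1 1
  have h1_2 := congrFun h1 2; have h1_3 := congrFun h1 3
  have h2_1 := congrFun h2 1; have h2_2 := congrFun h2 2
  have h2_3 := congrFun h2 3
  have h3_1 := congrFun h3 1; have h3_2 := congrFun h3 2
  have h3_3 := congrFun h3 3
  have h4_3 := congrFun h4 3
  simp [fourDimBracket, minor3, Pi.single_apply] at h1_0 h1_1 h1_2 h1_3 h2_1 h2_2 h2_3 h3_1 h3_2 h3_3 h4_3
  -- the diagonal entries vanish
  have e00 : N (Pi.single 0 1) 0 = 0 := by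
    linear_combination (1/4 : ℂ) * h1_0 - (1/4 : ℂ) * h2_2 - (1/4 : ℂ) * h3_1 - (1/4 : ℂ) * h4_3
  have e11 : N (Pi.single 1 1) 1 = 0 := by
    linear_combination (1/4 : ℂ) * h3_1 - (1/4 : ℂ) * h1_0 - (1/4 : ℂ) * h2_2 - (1/4 : ℂ) * h4_3
  have e22 : N (Pi.single 2 1) 2 = 0 := by
    linear_combination (1/4 : ℂ) * h2_2 - (1/4 : ℂ) * h1_0 - (1/4 : ℂ) * h3_1 - (1/4 : ℂ) * h4_3
  have e33 : N (Pi.single 3 1) 3 = 0 := by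
    linear_combination (1/4 : ℂ) * h4_3 - (1/4 : ℂ) * h1_0 - (1/4 : ℂ) * h2_2 - (1/4 : ℂ) * h3_1
  -- expansion of N in coordinates
  have hN : ∀ (x : Fin 4 → ℂ) (i : Fin 4), N x i
      = x 0 * N (Pi.single 0 1) i + x 1 * N (Pi.single 1 1) i
        + x 2 * N (Pi.single 2 1) i + x 3 * N (Pi.single 3 1) i := by
    intro x i
    have hx : x = x 0 • (Pi.single 0 1 : Fin 4 → ℂ) + x 1 • (Pi.single 1 1 : Fin 4 → ℂ)
        + x 2 • (Pi.single 2 1 : Fin 4 → ℂ) + x 3 • (Pi.single 3 1 : Fin 4 → ℂ) := by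
      funext j; fin_cases j <;> simp [Pi.single_apply]
    conv_lhs => rw [hx]
    simp [smul_eq_mul]
  -- the matrix of N in solved (skew) form
  obtain ⟨a, b, c, d, e, f, hN0, hN1, hN2, hN3⟩ :
      ∃ a b c d e f : ℂ,
        (∀ x : Fin 4 → ℂ, N x 0 = a * x 1 + b * x 2 + c * x 3) ∧
        (∀ x : Fin 4 → ℂ, N x 1 = a * x 0 + d * x 2 + e * x 3) ∧
        (∀ x : Fin 4 → ℂ, N x 2 = -b * x 0 + d * x 1 + f * x 3) ∧
        (∀ x : Fin 4 → ℂ, N x 3 = c * x 0 - e * x 1 + f * x 2) := by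
    refine ⟨N (Pi.single 1 1) 0, N (Pi.single 2 1) 0, N (Pi.single 3 1) 0,
           N (Pi.single 2 1) 1, N (Pi.single 3 1) 1, N (Pi.single 3 1) 2,
           fun x => ?_, fun x => ?_, fun x => ?_, fun x => ?_⟩ <;> rw [hN]
    · linear_combination x 0 * e00
    · linear_combination x 0 * h1_1 + x 1 * e11
    · linear_combination x 0 * h1_2 + x 1 * h3_2 + x 2 * e22
    · linear_combination x 0 * h1_3 + x 1 * h3_3 + x 2 * h2_3 + x 3 * e33
  have hRB : IsRotaBaxter3 ℂ fourDimBracket N := by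
    intro x y z
    funext i
    fin_cases i <;>
    · simp only [map_add, Pi.add_apply]
      simp [fourDimBracket, minor3, Pi.single_apply, hN0, hN1, hN2, hN3]
      ring
  refine ⟨hRB, ?_⟩
  intro x y z
  have hz : fourDimBracket (N x) y z + fourDimBracket x (N y) z + fourDimBracket x y (N z)
      - N (fourDimBracket x y z) = 0 := by
    rw [hder]; abel
  rw [hz, map_zero, sub_zero]
  exact hRB x y z
end
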